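/- arXiv:1910.02777 — 7 statements merged into one kernel-verified Lean document; each statement's English description precedes it below -/
import Mathlib

section
/- Let σ > 0 and let f : ℂ → ℂ be an entire function of exponential type not exceeding σ (i.e., for every ε > 0 there exists C_ε > 0 with |f(z)| ≤ C_ε e^{(σ+ε)|z|} for all z ∈ ℂ), which is bounded on the real axis, and which satisfies f(kπ/σ) = 0 for every k ∈ ℤ. Then there exists a constant λ ∈ ℂ such that f(z) = λ sin(σz) for all z ∈ ℂ. -/
open Real

section Aux
open Complex Filter Set Bornology

/-- norm squared of complex sine. -/
lemma norm_sin_sq (z : ℂ) :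
    ‖Complex.sin z‖ ^ 2 = Real.sin z.re ^ 2 + Real.sinh z.im ^ 2 := by
  have hz : z = (z.re : ℂ) + (z.im : ℂ) * Complex.I := (Complex.re_add_im z).symm
  rw [hz, Complex.sin_add, Complex.cos_mul_I, Complex.sin_mul_I]
  have : Complex.sin z.re * Complex.cosh z.im + Complex.cos z.re * (Complex.sinh z.im * Complex.I)
      = ((Real.sin z.re * Real.cosh z.im : ℝ) : ℂ) + ((Real.cos z.re * Real.sinh z.im : ℝ) : ℂ) * Complex.I := by
    push_cast [← Complex.ofReal_sin, ← Complex.ofReal_cos, ← Complex.ofReal_sinh, ← Complex.ofReal_cosh]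
    ring
  rw [this]
  rw [Complex.sq_norm, Complex.normSq_add_mul_I]
  simp only [Complex.add_re, Complex.ofReal_re, Complex.mul_re, Complex.I_re, Complex.mul_im,
    Complex.I_im, Complex.ofReal_im, Complex.add_im]
  have h1 : z.re + (z.im * 0 - 0 * 1) = z.re := by ring
  have h2 : (0:ℝ) + (z.im * 1 + 0 * 0) = z.im := by ring
  rw [h1, h2]
  nlinarith [Real.sin_sq_add_cos_sq z.re, Real.cosh_sq z.im]

lemma abs_sinh_le_norm_sin (z : ℂ) : Real.sinh |z.im| ≤ ‖Complex.sin z‖ := by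
  have h := norm_sin_sq z
  have h1 : |Real.sinh z.im| = Real.sinh |z.im| := Real.abs_sinh z.im
  nlinarith [norm_nonneg (Complex.sin z), abs_nonneg (Real.sinh z.im), _root_.sq_abs (Real.sinh z.im),
    sq_nonneg (Real.sin z.re)]

lemma abs_sin_le_norm_sin (z : ℂ) : |Real.sin z.re| ≤ ‖Complex.sin z‖ := by
  have h := norm_sin_sq z
  nlinarith [norm_nonneg (Complex.sin z), abs_nonneg (Real.sin z.re), _root_.sq_abs (Real.sin z.re),
    sq_nonneg (Real.sinh z.im)]

/-- Phragmén–Lindelöf half-plane estimate. -/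
lemma halfplane_aux {F : ℂ → ℂ} {a C M : ℝ} (ha : 0 < a) (hC : 0 < C)
    (hd : Differentiable ℂ F)
    (hg : ∀ w : ℂ, ‖F w‖ ≤ C * Real.exp (a * ‖w‖))
    (him : ∀ x : ℝ, ‖F ((x : ℂ) * Complex.I)‖ ≤ M) :
    ∀ w : ℂ, 0 ≤ w.re → ‖F w‖ ≤ M * Real.exp (a * w.re) := by
  intro w hw
  set G : ℂ → ℂ := fun w => F w * Complex.exp (-(a : ℂ) * w) with hG
  have hGd : Differentiable ℂ G := hd.mul ((differentiable_id.const_mul _).cexp)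
  have hGn : ∀ w : ℂ, ‖G w‖ = ‖F w‖ * Real.exp (-(a * w.re)) := by
    intro w
    rw [hG]
    simp [Complex.norm_exp, map_mul]
  have key : ‖G w‖ ≤ M := by
    apply PhragmenLindelof.right_half_plane_of_bounded_on_real hGd.diffContOnCl ?_ ?_ ?_ hw
    · refine ⟨1, one_lt_two, 2 * a, ?_⟩
      rw [Asymptotics.isBigO_iff]
      refine ⟨C, Filter.Eventually.of_forall fun z => ?_⟩
      rw [hGn z, Real.norm_eq_abs, abs_of_pos (Real.exp_pos _), Real.rpow_one]
      have h1 : ‖F z‖ * Real.exp (-(a * z.re)) ≤ (C * Real.exp (a * ‖z‖)) * Real.exp (a * ‖z‖) := by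
        have e1 : Real.exp (-(a * z.re)) ≤ Real.exp (a * ‖z‖) := by
          apply Real.exp_le_exp.2
          have := Complex.abs_re_le_norm z
          nlinarith [neg_abs_le z.re, Complex.abs_re_le_norm z]
        exact mul_le_mul (hg z) e1 (Real.exp_pos _).le (by positivity)
      calc ‖F z‖ * Real.exp (-(a * z.re)) ≤ (C * Real.exp (a * ‖z‖)) * Real.exp (a * ‖z‖) := h1
        _ = C * Real.exp (2 * a * ‖z‖) := by
            rw [mul_assoc, ← Real.exp_add]; ring_nf
    · refine ⟨C, ?_⟩
      rw [Filter.eventually_map]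
      filter_upwards [Filter.eventually_ge_atTop (0 : ℝ)] with x hx
      rw [hGn]
      have : ‖F (x : ℂ)‖ ≤ C * Real.exp (a * x) := by
        have := hg (x : ℂ)
        simpa [Complex.norm_real, _root_.abs_of_nonneg hx] using this
      calc ‖F (x:ℂ)‖ * Real.exp (-(a * (x:ℂ).re)) ≤ (C * Real.exp (a * x)) * Real.exp (-(a * x)) := by
            simp only [Complex.ofReal_re]
            exact mul_le_mul_of_nonneg_right this (Real.exp_pos _).le
        _ = C := by rw [mul_assoc, ← Real.exp_add]; simp
    · intro x
      rw [hGn]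
      have hre : ((x:ℂ) * Complex.I).re = 0 := by simp
      rw [hre]
      simpa using him x
  have : ‖F w‖ = ‖G w‖ * Real.exp (a * w.re) := by
    rw [hGn, mul_assoc, ← Real.exp_add]; simp
  rw [this]
  exact mul_le_mul_of_nonneg_right key (Real.exp_pos _).le

lemma growth_aux (σ : ℝ) (hσ : 0 < σ) (f : ℂ → ℂ)
    (htype : ∀ ε : ℝ, 0 < ε → ∃ C : ℝ, 0 < C ∧
      ∀ z : ℂ, ‖f z‖ ≤ C * Real.exp ((σ + ε) * ‖z‖))
    (hdiff : Differentiable ℂ f)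
    {M₀ : ℝ} (hM₀ : ∀ x : ℝ, ‖f x‖ ≤ M₀) :
    ∀ z : ℂ, ‖f z‖ ≤ M₀ * Real.exp (σ * |z.im|) := by
  intro z
  have key : ∀ ε : ℝ, 0 < ε → ‖f z‖ ≤ M₀ * Real.exp ((σ + ε) * |z.im|) := by
    intro ε hε
    obtain ⟨C, hCpos, hC⟩ := htype ε hε
    have ha : (0 : ℝ) < σ + ε := by linarith
    rcases le_total 0 z.im with him | him
    · have h1 := halfplane_aux (F := fun w => f (w * Complex.I)) ha hCpos
        (hdiff.comp (differentiable_id.mul_const Complex.I))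
        (fun w => by simpa [map_mul] using hC (w * Complex.I))
        (fun x => by
          have e : (x : ℂ) * Complex.I * Complex.I = ((-x : ℝ) : ℂ) := by
            rw [mul_assoc, Complex.I_mul_I]; push_cast; ring
          show ‖f ((x:ℂ) * Complex.I * Complex.I)‖ ≤ M₀
          rw [e]; exact hM₀ (-x))
        (-(z * Complex.I)) (by simp [him])
      have e2 : -(z * Complex.I) * Complex.I = z := by
        have : Complex.I * Complex.I = -1 := Complex.I_mul_I
        calc -(z * Complex.I) * Complex.I = -(z * (Complex.I * Complex.I)) := by ring
          _ = z := by rw [this]; ring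
      have e3 : (-(z * Complex.I)).re = z.im := by simp
      simp only [e2] at h1
      rw [e3] at h1
      rw [_root_.abs_of_nonneg him]
      exact h1
    · have h1 := halfplane_aux (F := fun w => f (-(w * Complex.I))) ha hCpos
        (hdiff.comp ((differentiable_id.mul_const Complex.I).neg))
        (fun w => by simpa [map_mul] using hC (-(w * Complex.I)))
        (fun x => by
          have e : -((x : ℂ) * Complex.I * Complex.I) = ((x : ℝ) : ℂ) := by
            rw [mul_assoc, Complex.I_mul_I]; push_cast; ring
          show ‖f (-((x:ℂ) * Complex.I * Complex.I))‖ ≤ M₀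
          rw [e]; exact hM₀ x)
        (z * Complex.I) (by simp [him])
      have e2 : -(z * Complex.I * Complex.I) = z := by
        have : Complex.I * Complex.I = -1 := Complex.I_mul_I
        calc -(z * Complex.I * Complex.I) = -(z * (Complex.I * Complex.I)) := by ring
          _ = z := by rw [this]; ring
      have e3 : (z * Complex.I).re = -z.im := by simp
      simp only [e2] at h1
      rw [e3] at h1
      rw [_root_.abs_of_nonpos him]
      exact h1
  have cont : Filter.Tendsto (fun ε : ℝ => M₀ * Real.exp ((σ + ε) * |z.im|)) (nhdsWithin 0 (Set.Ioi 0))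
      (nhds (M₀ * Real.exp (σ * |z.im|))) := by
    apply Filter.Tendsto.mono_left _ nhdsWithin_le_nhds
    have hcont : Continuous (fun ε : ℝ => M₀ * Real.exp ((σ + ε) * |z.im|)) := by
      continuity
    have := hcont.tendsto 0
    simpa using this
  exact ge_of_tendsto cont (eventually_nhdsWithin_of_forall (fun ε hε => key ε hε))


end Aux

/-- Lemma 2: An entire function of exponential type at most `σ`,
bounded on the real axis, vanishing at all points `kπ/σ`, `k ∈ ℤ`, is a constant
multiple of `sin (σ z)`. -/
theorem entire_expType_bounded_vanishing_eq_sin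
    (σ : ℝ) (hσ : 0 < σ) (f : ℂ → ℂ)
    (hdiff : Differentiable ℂ f)
    (htype : ∀ ε : ℝ, 0 < ε → ∃ C : ℝ, 0 < C ∧
      ∀ z : ℂ, ‖f z‖ ≤ C * Real.exp ((σ + ε) * ‖z‖))
    (hbdd : ∃ M : ℝ, ∀ x : ℝ, ‖f x‖ ≤ M)
    (hzero : ∀ k : ℤ, f ((k : ℂ) * π / σ) = 0) :
    ∃ lam : ℂ, ∀ z : ℂ, f z = lam * Complex.sin (σ * z) := by
  classical
  obtain ⟨M₀, hM₀⟩ := hbdd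
  have hM₀0 : 0 ≤ M₀ := le_trans (norm_nonneg _) (hM₀ 0)
  have hgrow : ∀ z : ℂ, ‖f z‖ ≤ M₀ * Real.exp (σ * |z.im|) :=
    growth_aux σ hσ f htype hdiff hM₀
  set s : ℂ → ℂ := fun z => Complex.sin ((σ : ℂ) * z) with hs_def
  have hs_diff : Differentiable ℂ s :=
    Complex.differentiable_sin.comp (differentiable_id.const_mul _)
  have hs_deriv : ∀ z : ℂ, HasDerivAt s ((σ : ℂ) * Complex.cos ((σ : ℂ) * z)) z := by
    intro z
    have h1 : HasDerivAt (fun z : ℂ => (σ : ℂ) * z) ((σ : ℂ)) z := by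
      simpa using (hasDerivAt_id z).const_mul (σ : ℂ)
    have := (Complex.hasDerivAt_sin ((σ : ℂ) * z)).comp z h1
    exact this.congr_deriv (mul_comm _ _)
  have hσC : (σ : ℂ) ≠ 0 := Complex.ofReal_ne_zero.2 hσ.ne'
  have hzeros : ∀ z : ℂ, s z = 0 → f z = 0 ∧ Complex.cos ((σ : ℂ) * z) ≠ 0 := by
    intro z hz
    constructor
    · rw [hs_def] at hz
      obtain ⟨k, hk⟩ := Complex.sin_eq_zero_iff.1 hz
      have : z = (k : ℂ) * (π : ℂ) / σ := by
        field_simp at hk ⊢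
        linear_combination hk
      rw [this]
      exact hzero k
    · intro hcos
      have := Complex.sin_sq_add_cos_sq ((σ : ℂ) * z)
      rw [hs_def] at hz
      simp only [hz, hcos] at this
      norm_num at this
  -- the quotient function
  set g : ℂ → ℂ := fun z =>
    if s z = 0 then deriv f z / ((σ : ℂ) * Complex.cos ((σ : ℂ) * z)) else f z / s z with hg_def
  have hg_eq : ∀ z : ℂ, s z ≠ 0 → g z = f z / s z := by
    intro z hz; simp [hg_def, hz]
  have hg_diff : Differentiable ℂ g := by
    intro z₀
    by_cases h0 : s z₀ = 0
    · have hfz₀ : f z₀ = 0 := (hzeros z₀ h0).1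
      have hcos : Complex.cos ((σ : ℂ) * z₀) ≠ 0 := (hzeros z₀ h0).2
      have hder : deriv s z₀ = (σ : ℂ) * Complex.cos ((σ : ℂ) * z₀) := (hs_deriv z₀).deriv
      have hderiv_ne : deriv s z₀ ≠ 0 := by rw [hder]; exact mul_ne_zero hσC hcos
      have hsa : AnalyticAt ℂ s z₀ := hs_diff.analyticAt z₀
      have hev : ∀ᶠ z in nhdsWithin z₀ {z₀}ᶜ, s z ≠ 0 := by
        rcases hsa.eventually_eq_zero_or_eventually_ne_zero with h | h
        · exfalso
          apply hderiv_ne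
          have : deriv s z₀ = deriv (fun _ : ℂ => (0 : ℂ)) z₀ := Filter.EventuallyEq.deriv_eq h
          simpa using this
        · exact h
      have key : g =ᶠ[nhds z₀] fun z => dslope f z₀ z / dslope s z₀ z := by
        have h2 : ∀ᶠ z in nhds z₀, z ≠ z₀ → s z ≠ 0 := eventually_nhdsWithin_iff.mp hev
        filter_upwards [h2] with z hz
        rcases eq_or_ne z z₀ with rfl | hne
        · rw [dslope_same, dslope_same, hder]
          simp [hg_def, h0]
        · have hsz : s z ≠ 0 := hz hne
          rw [dslope_of_ne _ hne, dslope_of_ne _ hne, hg_eq z hsz]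
          rw [slope_def_field, slope_def_field, hfz₀, h0]
          have hzz : z - z₀ ≠ 0 := sub_ne_zero.2 hne
          field_simp
          ring
      have h1 : AnalyticAt ℂ (dslope f z₀) z₀ := by
        obtain ⟨p, hp⟩ := hdiff.analyticAt z₀
        exact ⟨p.fslope, hp.has_fpower_series_dslope_fslope⟩
      have h2 : AnalyticAt ℂ (dslope s z₀) z₀ := by
        obtain ⟨p, hp⟩ := hsa
        exact ⟨p.fslope, hp.has_fpower_series_dslope_fslope⟩
      have h3 : DifferentiableAt ℂ (fun z => dslope f z₀ z / dslope s z₀ z) z₀ :=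
        h1.differentiableAt.div h2.differentiableAt (by rwa [dslope_same])
      exact h3.congr_of_eventuallyEq key
    · have hev : ∀ᶠ z in nhds z₀, s z ≠ 0 :=
        (hs_diff.continuous.continuousAt).eventually_ne h0
      have h3 : DifferentiableAt ℂ (fun z => f z / s z) z₀ :=
        (hdiff z₀).div (hs_diff z₀) h0
      exact h3.congr_of_eventuallyEq (by filter_upwards [hev] with z hz; exact hg_eq z hz)
  -- lower bound via sinh
  have him_smul : ∀ z : ℂ, ((σ : ℂ) * z).im = σ * z.im := by intro z; simp
  have hsinh : ∀ z : ℂ, Real.sinh (σ * |z.im|) ≤ ‖s z‖ := by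
    intro z
    have h := abs_sinh_le_norm_sin ((σ : ℂ) * z)
    rw [him_smul, abs_mul, _root_.abs_of_pos hσ] at h
    exact h
  have hπ0 : (0 : ℝ) < π := Real.pi_pos
  have h2σ : (0 : ℝ) < 2 * σ := by linarith
  set c : ℝ := min (Real.sinh σ) 1 with hc_def
  have hc_pos : 0 < c := lt_min (Real.sinh_pos_iff.2 hσ) one_pos
  set K₁ : ℝ := M₀ * Real.exp σ / c with hK₁_def
  set K₂ : ℝ := 2 * M₀ / (1 - Real.exp (-(2 * σ))) with hK₂_def
  have hden2 : 0 < 1 - Real.exp (-(2 * σ)) := by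
    have : Real.exp (-(2 * σ)) < 1 := Real.exp_lt_one_iff.2 (by linarith)
    linarith
  -- bound on the strip
  have hstrip : ∀ z : ℂ, |z.im| ≤ 1 → ‖g z‖ ≤ K₁ := by
    intro z hzim
    set k : ℤ := ⌊σ * z.re / π - 1/2⌋ with hk_def
    set a₁ : ℝ := (2 * (k : ℝ) + 1) * π / (2 * σ) with ha₁_def
    set a₂ : ℝ := (2 * (k : ℝ) + 3) * π / (2 * σ) with ha₂_def
    have ha12 : a₁ < a₂ := (div_lt_div_iff_of_pos_right h2σ).2 (by nlinarith)
    have hk1 : (k : ℝ) ≤ σ * z.re / π - 1/2 := Int.floor_le _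
    have hk2 : σ * z.re / π - 1/2 < (k : ℝ) + 1 := Int.lt_floor_add_one _
    have e0 : σ * z.re / π * π = σ * z.re := div_mul_cancel₀ _ hπ0.ne'
    have hre1 : a₁ ≤ z.re := by
      rw [ha₁_def, div_le_iff₀ h2σ]
      have h := mul_le_mul_of_nonneg_right hk1 hπ0.le
      rw [sub_mul, e0] at h
      nlinarith
    have hre2 : z.re ≤ a₂ := by
      rw [ha₂_def, le_div_iff₀ h2σ]
      have h := mul_le_mul_of_nonneg_right hk2.le hπ0.le
      rw [sub_mul, e0] at h
      nlinarith
    have hz_cl : z ∈ closure (Set.Ioo a₁ a₂ ×ℂ Set.Ioo (-1 : ℝ) 1) := by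
      rw [Complex.closure_reProdIm, closure_Ioo ha12.ne, closure_Ioo (by norm_num : (-1 : ℝ) ≠ 1)]
      rw [Complex.mem_reProdIm]
      have := abs_le.1 hzim
      exact ⟨⟨hre1, hre2⟩, ⟨this.1, this.2⟩⟩
    have hbdU : Bornology.IsBounded (Set.Ioo a₁ a₂ ×ℂ Set.Ioo (-1 : ℝ) 1) :=
      (Metric.isBounded_Ioo _ _).reProdIm (Metric.isBounded_Ioo _ _)
    have hfw_bd : ∀ w : ℂ, |w.im| ≤ 1 → ‖f w‖ ≤ M₀ * Real.exp σ := by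
      intro w hw
      refine (hgrow w).trans ?_
      have : σ * |w.im| ≤ σ := by nlinarith [abs_nonneg w.im]
      exact mul_le_mul_of_nonneg_left (Real.exp_le_exp.2 this) hM₀0
    have hfront : ∀ w ∈ frontier (Set.Ioo a₁ a₂ ×ℂ Set.Ioo (-1 : ℝ) 1), ‖g w‖ ≤ K₁ := by
      intro w hw
      rw [Complex.frontier_reProdIm, closure_Ioo ha12.ne,
        closure_Ioo (by norm_num : (-1 : ℝ) ≠ 1), frontier_Ioo ha12,
        frontier_Ioo (by norm_num : (-1 : ℝ) < 1)] at hw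
      have hlow : c ≤ ‖s w‖ ∧ |w.im| ≤ 1 := by
        rcases hw with h | h
        · -- horizontal sides : |w.im| = 1
          rw [Complex.mem_reProdIm] at h
          have him1 : |w.im| = 1 := by
            rcases h.2 with h2 | h2 <;> rw [h2] <;> norm_num
          refine ⟨?_, him1.le⟩
          have := hsinh w
          rw [him1, mul_one] at this
          exact le_trans (min_le_left _ _) this
        · -- vertical sides : σ * w.re = k π + π/2 (mod π)
          rw [Complex.mem_reProdIm] at h
          have him1 : |w.im| ≤ 1 := abs_le.2 ⟨h.2.1, h.2.2⟩
          refine ⟨?_, him1⟩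
          have hsin1 : |Real.sin (σ * w.re)| = 1 := by
            rcases h.1 with h1 | h1
            · have : σ * w.re = (k : ℝ) * π + π / 2 := by
                rw [h1, ha₁_def]; field_simp
              rw [this, Real.sin_add_pi_div_two]
              exact Real.abs_cos_int_mul_pi k
            · have : σ * w.re = ((k : ℝ) + 1) * π + π / 2 := by
                rw [h1, ha₂_def]; field_simp; ring
              rw [this]
              have : (((k : ℝ) + 1) * π + π / 2) = ((k + 1 : ℤ) : ℝ) * π + π / 2 := by push_cast; ring
              rw [this, Real.sin_add_pi_div_two]
              exact Real.abs_cos_int_mul_pi (k + 1)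
          have h2 := abs_sin_le_norm_sin ((σ : ℂ) * w)
          have hre : ((σ : ℂ) * w).re = σ * w.re := by simp
          rw [hre, hsin1] at h2
          exact le_trans (min_le_right _ _) h2
      have hsw_ne : s w ≠ 0 := by
        intro h0
        rw [h0, norm_zero] at hlow
        exact absurd hlow.1 (not_le.2 hc_pos)
      rw [hg_eq w hsw_ne, norm_div, hK₁_def]
      exact div_le_div₀ (by positivity) (hfw_bd w hlow.2) hc_pos hlow.1
    exact Complex.norm_le_of_forall_mem_frontier_norm_le hbdU hg_diff.diffContOnCl hfront hz_cl
  -- bound off the strip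
  have hout : ∀ z : ℂ, 1 ≤ |z.im| → ‖g z‖ ≤ K₂ := by
    intro z hzim
    set t : ℝ := σ * |z.im| with ht_def
    have htσ : σ ≤ t := by nlinarith
    have hsinh_pos : 0 < Real.sinh t := Real.sinh_pos_iff.2 (by linarith)
    have hsz : Real.sinh t ≤ ‖s z‖ := hsinh z
    have hsw_ne : s z ≠ 0 := by
      intro h0; rw [h0, norm_zero] at hsz; linarith
    rw [hg_eq z hsw_ne, norm_div]
    have step1 : ‖f z‖ / ‖s z‖ ≤ M₀ * Real.exp t / Real.sinh t :=
      div_le_div₀ (by positivity) (hgrow z) hsinh_pos hsz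
    refine step1.trans ?_
    rw [hK₂_def, div_le_div_iff₀ hsinh_pos hden2, Real.sinh_eq]
    have h1 : Real.exp (-t) ≤ Real.exp t * Real.exp (-(2 * σ)) := by
      rw [← Real.exp_add]; exact Real.exp_le_exp.2 (by linarith)
    nlinarith [mul_le_mul_of_nonneg_left h1 hM₀0, Real.exp_pos t, Real.exp_pos (-t),
      Real.exp_pos (-(2 * σ))]
  -- Liouville
  have hbound : ∀ z : ℂ, ‖g z‖ ≤ max K₁ K₂ := by
    intro z
    rcases le_total |z.im| 1 with h | h
    · exact (hstrip z h).trans (le_max_left _ _)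
    · exact (hout z h).trans (le_max_right _ _)
  have hrange : Bornology.IsBounded (Set.range g) := by
    rw [isBounded_iff_forall_norm_le]
    exact ⟨max K₁ K₂, by rintro x ⟨z, rfl⟩; exact hbound z⟩
  obtain ⟨lam, hlam⟩ := hg_diff.exists_const_forall_eq_of_bounded hrange
  refine ⟨lam, fun z => ?_⟩
  by_cases h : s z = 0
  · rw [(hzeros z h).1]
    have h0 : Complex.sin ((σ : ℂ) * z) = 0 := h
    rw [h0, mul_zero]
  · have h1 := hlam z
    rw [hg_eq z h, div_eq_iff h] at h1
    exact h1
end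

section
/- Let μ be a finite (positive) Borel measure on ℝ and let f(x) = ∫_ℝ e^{ixt} dμ(t), so f ∈ W⁺(ℝ). Let ℓ_f : ℝ → ℂ be the piecewise linear continuous function interpolating f at the integers: ℓ_f(x) = (1 − (x − ⌊x⌋)) f(⌊x⌋) + (x − ⌊x⌋) f(⌊x⌋ + 1). Then there exists a finite (positive) Borel measure ν on ℝ such that ℓ_f(x) = ∫_ℝ e^{ixt} dν(t) for all x ∈ ℝ, and ν(ℝ) ≤ μ(ℝ); that is, ℓ_f ∈ W⁺(ℝ) with ‖ℓ_f‖_W ≤ ‖f‖_W. -/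
open MeasureTheory Real Filter
open scoped NNReal ENNReal

/-! Auxiliary: the Fejér-type weight `zzA s = 2(1 - cos s)/s²` (value `1` at `s = 0`),
which is the Fourier transform of the triangle (hat) function. -/

noncomputable def zzA (s : ℝ) : ℝ := if s = 0 then 1 else 2 * (1 - Real.cos s) / s ^ 2

lemma zzA_nonneg (s : ℝ) : 0 ≤ zzA s := by
  unfold zzA
  split
  · norm_num
  · have := Real.cos_le_one s
    apply div_nonneg
    · nlinarith
    · positivity

lemma zzA_le (s : ℝ) (hs : s ≠ 0) : zzA s ≤ 4 / s ^ 2 := by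
  unfold zzA
  rw [if_neg hs]
  have h1 : (0:ℝ) < s ^ 2 := by positivity
  rw [div_le_div_iff_of_pos_right h1]
  nlinarith [Real.neg_one_le_cos s]

lemma zzA_measurable : Measurable zzA := by
  unfold zzA
  refine Measurable.ite (measurableSet_eq) measurable_const ?_
  exact ((measurable_const.mul ((measurable_const.sub Real.continuous_cos.measurable))).div
    ((continuous_pow 2).measurable))

lemma zzA_summable (t : ℝ) : Summable fun n : ℤ => zzA (t + 2 * π * n) := by
  have hg : Summable fun n : ℤ => 4 * (1 / ((n : ℝ)) ^ 2) :=
    (summable_one_div_int_pow.mpr one_lt_two).mul_left 4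
  refine Summable.of_norm_bounded_eventually hg ?_
  rw [Filter.eventually_cofinite]
  have hfin : (Set.Icc (-(⌈|t|⌉ + 1)) (⌈|t|⌉ + 1)).Finite := Set.finite_Icc _ _
  refine hfin.subset ?_
  intro n hn
  simp only [Set.mem_setOf_eq, not_le] at hn
  by_contra hmem
  refine absurd ?_ (not_le.mpr hn)
  -- from ¬ n ∈ Icc we get |t| + 1 ≤ |n|
  have hz : (⌈|t|⌉ + 1 : ℤ) ≤ |n| := by
    simp only [Set.mem_Icc, not_and_or, not_le] at hmem
    have hc : (0:ℤ) ≤ ⌈|t|⌉ := Int.ceil_nonneg (abs_nonneg t)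
    rcases hmem with h | h
    · rw [abs_of_nonpos (show n ≤ 0 by omega)]; omega
    · rw [abs_of_nonneg (show 0 ≤ n by omega)]; omega
  have hn' : ((⌈|t|⌉ : ℝ) + 1) ≤ |(n : ℝ)| := by
    rw [← Int.cast_abs]
    exact_mod_cast hz
  have ht : |t| + 1 ≤ |(n : ℝ)| := by
    have := Int.le_ceil |t|
    linarith
  have hnabs : (1:ℝ) ≤ |(n:ℝ)| := by
    have := abs_nonneg t; linarith
  have hpi := Real.pi_gt_three
  have hs : |(n:ℝ)| ≤ |t + 2 * π * n| := by
    have h2 : |2 * π * (n:ℝ)| = 2 * π * |(n:ℝ)| := by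
      rw [abs_mul, abs_of_nonneg (by positivity)]
    calc |(n:ℝ)| = 2 * π * |(n:ℝ)| - (2 * π - 1) * |(n:ℝ)| := by ring
    _ ≤ |2 * π * (n:ℝ)| - |t| := by
        rw [h2]
        have : |t| ≤ (2 * π - 1) * |(n:ℝ)| := by nlinarith [abs_nonneg t]
        linarith
    _ ≤ |t + 2 * π * n| := by
        have h3 : |2 * π * (n:ℝ)| ≤ |t + 2 * π * n| + |t| := by
          calc |2 * π * (n:ℝ)| = |(t + 2 * π * n) + (-t)| := by
                rw [show (t + 2 * π * (n:ℝ)) + -t = 2 * π * (n:ℝ) by ring]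
          _ ≤ |t + 2 * π * n| + |-t| := abs_add_le _ _
          _ = |t + 2 * π * n| + |t| := by rw [abs_neg]
        linarith
  have hs0 : t + 2 * π * n ≠ 0 := by
    intro h
    rw [h, abs_zero] at hs
    have := abs_nonneg ((n:ℝ))
    linarith
  rw [Real.norm_eq_abs, abs_of_nonneg (zzA_nonneg _)]
  calc zzA (t + 2 * π * n) ≤ 4 / (t + 2 * π * n) ^ 2 := zzA_le _ hs0
  _ ≤ 4 * (1 / ((n : ℝ)) ^ 2) := by
      rw [mul_one_div]
      have hne : ((n:ℝ)) ≠ 0 := by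
        intro h
        rw [h, abs_zero] at hnabs
        linarith
      have hn2 : (0:ℝ) < (n:ℝ)^2 := by positivity
      apply div_le_div_of_nonneg_left (by norm_num) hn2
      calc ((n:ℝ))^2 = |(n:ℝ)|^2 := (sq_abs _).symm
      _ ≤ |t + 2*π*n|^2 := by nlinarith [abs_nonneg ((n:ℝ))]
      _ = (t + 2*π*n)^2 := sq_abs _

/-! The 1-periodic profile function and its Fourier coefficients. -/

noncomputable def zzF (t : ℝ) : ℝ → ℂ := fun θ =>
  ((1 - (θ : ℂ)) + (θ : ℂ) * Complex.exp (Complex.I * t)) * Complex.exp (-(Complex.I * θ * t))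

lemma zzF_cont (t : ℝ) : Continuous (zzF t) := by
  unfold zzF
  fun_prop

lemma zzF_period (t : ℝ) : zzF t 0 = zzF t (0 + 1) := by
  simp only [zzF, Complex.ofReal_zero, Complex.ofReal_one, zero_add]
  rw [show (1:ℂ) - 1 + 1 * Complex.exp (Complex.I * t) = Complex.exp (Complex.I * t) by ring,
    ← Complex.exp_add]
  norm_num

theorem zzCoeff (t : ℝ) (n : ℤ) :
    haveI : Fact ((0:ℝ) < 1) := ⟨one_pos⟩
    fourierCoeff (AddCircle.liftIco 1 0 (zzF t)) n = ((zzA (t + 2 * π * n) : ℝ) : ℂ) := by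
  haveI : Fact ((0:ℝ) < 1) := ⟨one_pos⟩
  set s : ℝ := t + 2 * π * n with hs_def
  rw [fourierCoeff_liftIco_eq, fourierCoeffOn_eq_integral]
  simp only [zero_add, sub_zero, fourier_coe_apply, smul_eq_mul, one_smul, Complex.ofReal_one, div_one]
  by_cases hs : s = 0
  · -- degenerate case : t = -2πn, integrand ≡ 1
    have htr : t = -(2 * π * n) := by linarith [hs_def ▸ hs]
    have hI : ∀ θ : ℝ, Complex.exp (2 * π * Complex.I * (-n : ℤ) * θ) * zzF t θ = 1 := by
      intro θ
      unfold zzF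
      have hexp_t : Complex.exp (Complex.I * t) = 1 := by
        rw [show Complex.I * (t:ℂ) = (-n : ℤ) * (2 * π * Complex.I) by
          rw [htr]; push_cast; ring]
        exact Complex.exp_int_mul_two_pi_mul_I _
      rw [hexp_t, mul_one, show ((1:ℂ) - θ) + θ = 1 by ring, one_mul, ← Complex.exp_add,
        show 2 * (π:ℂ) * Complex.I * ((-n : ℤ) : ℂ) * θ + -(Complex.I * θ * t) = 0 by
          rw [htr]; push_cast; ring]
      exact Complex.exp_zero
    rw [intervalIntegral.integral_congr (g := fun _ => (1:ℂ)) (fun θ _ => hI θ)]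
    simp only [intervalIntegral.integral_const, smul_eq_mul, mul_one, sub_zero, one_smul]
    rw [hs]
    norm_num [zzA]
  · -- main case
    set c : ℂ := -(Complex.I * s) with hc_def
    have hsC : ((s:ℝ) : ℂ) ≠ 0 := Complex.ofReal_ne_zero.mpr hs
    have hc : c ≠ 0 := by
      rw [hc_def, neg_ne_zero]
      exact mul_ne_zero Complex.I_ne_zero hsC
    set d : ℂ := Complex.exp (Complex.I * t) - 1 with hd_def
    set G : ℝ → ℂ := fun θ => Complex.exp (c * θ) * ((1 + θ * d) / c - d / c ^ 2) with hG_def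
    have hint_eq : ∀ θ : ℝ, Complex.exp (2 * π * Complex.I * (-n : ℤ) * θ) * zzF t θ
        = (1 + θ * d) * Complex.exp (c * θ) := by
      intro θ
      unfold zzF
      rw [show ((1:ℂ) - θ) + θ * Complex.exp (Complex.I * t) = 1 + θ * d by
        rw [hd_def]; ring]
      rw [mul_comm (Complex.exp (2 * π * Complex.I * ((-n : ℤ) : ℂ) * θ)) _, mul_assoc,
        ← Complex.exp_add]
      congr 2
      rw [hc_def, hs_def]
      push_cast
      ring
    have hderiv : ∀ θ ∈ Set.uIcc (0:ℝ) 1, HasDerivAt G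
        (Complex.exp (2 * π * Complex.I * (-n : ℤ) * θ) * zzF t θ) θ := by
      intro θ _
      rw [hint_eq θ]
      have h1 : HasDerivAt (fun θ : ℝ => Complex.exp (c * θ)) (c * Complex.exp (c * θ)) θ := by
        have := (((hasDerivAt_id ((θ:ℝ) : ℂ)).const_mul c).cexp).comp_ofReal (z := θ)
        simpa [mul_comm] using this
      have h2 : HasDerivAt (fun θ : ℝ => (1 + (θ:ℂ) * d) / c - d / c ^ 2) (d / c) θ := by
        have := ((((hasDerivAt_id ((θ:ℝ) : ℂ)).mul_const d).const_add 1).div_const c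
          |>.sub_const (d / c ^ 2)).comp_ofReal (z := θ)
        simpa using this
      have h3 := h1.mul h2
      convert h3 using 1
      · rfl
      · rfl
      field_simp
      ring
    have hcont : Continuous fun θ : ℝ =>
        Complex.exp (2 * π * Complex.I * (-n : ℤ) * θ) * zzF t θ := by
      exact (Complex.continuous_exp.comp (by fun_prop)).mul (zzF_cont t)
    rw [intervalIntegral.integral_eq_sub_of_hasDerivAt hderiv
      (hcont.intervalIntegrable 0 1)]
    -- now evaluate G 1 - G 0
    have hu : Complex.exp (Complex.I * (s:ℝ)) = Complex.exp (Complex.I * t) := by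
      rw [show Complex.I * ((s:ℝ):ℂ) = Complex.I * t + n * (2 * π * Complex.I) by
        rw [hs_def]; push_cast; ring]
      rw [Complex.exp_add, Complex.exp_int_mul_two_pi_mul_I, mul_one]
    have huv : Complex.exp (Complex.I * (s:ℝ)) * Complex.exp (-(Complex.I * (s:ℝ))) = 1 := by
      rw [← Complex.exp_add]
      simp
    have hzzA : zzA s = 2 * (1 - Real.cos s) / s ^ 2 := by rw [zzA, if_neg hs]
    rw [hzzA, hG_def]
    simp only [Complex.ofReal_one, Complex.ofReal_zero, mul_one, mul_zero, zero_mul,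
      Complex.exp_zero, one_mul, zero_add]
    rw [hc_def, hd_def, ← hu]
    push_cast
    simp only [Complex.cos]
    rw [show ((s:ℝ):ℂ) * Complex.I = Complex.I * ((s:ℝ):ℂ) from mul_comm _ _,
      show (-((s:ℝ):ℂ)) * Complex.I = -(Complex.I * ((s:ℝ):ℂ)) by ring]
    field_simp
    linear_combination (-(Complex.I * ((s:ℝ):ℂ)) - 1) * huv
      - (2 - Complex.exp (Complex.I * ((s:ℝ):ℂ)) - Complex.exp (-(Complex.I * ((s:ℝ):ℂ))))
        * Complex.I_sq

theorem zz_hasSum (t x : ℝ) :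
    HasSum (fun n : ℤ => ((zzA (t + 2 * π * n) : ℝ) : ℂ) *
        Complex.exp (Complex.I * x * ((t + 2 * π * (n:ℝ) : ℝ) : ℂ)))
      ((1 - ((Int.fract x : ℝ) : ℂ)) * Complex.exp (Complex.I * ((⌊x⌋ : ℝ) : ℂ) * t)
        + ((Int.fract x : ℝ) : ℂ) * Complex.exp (Complex.I * (((⌊x⌋ : ℝ) : ℂ) + 1) * t)) := by
  haveI : Fact ((0:ℝ) < 1) := ⟨one_pos⟩
  set θ : ℝ := Int.fract x with hθ_def
  have hθ : θ ∈ Set.Ico (0:ℝ) (0 + 1) := by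
    rw [zero_add]
    exact ⟨Int.fract_nonneg x, Int.fract_lt_one x⟩
  have hxr : ((⌊x⌋ : ℤ) : ℝ) + θ = x := Int.floor_add_fract x
  have hxθ : ((x : ℝ) : ℂ) = (((⌊x⌋ : ℝ)) : ℂ) + ((θ : ℝ) : ℂ) := by
    exact_mod_cast congrArg (fun r : ℝ => (r : ℂ)) hxr.symm
  have hcont : Continuous (AddCircle.liftIco 1 0 (zzF t)) :=
    AddCircle.liftIco_continuous (zzF_period t) (zzF_cont t).continuousOn
  set H : C(AddCircle 1, ℂ) := ⟨_, hcont⟩ with hH_def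
  have hcoeff : ∀ n : ℤ, fourierCoeff (⇑H) n = ((zzA (t + 2 * π * n) : ℝ) : ℂ) := fun n =>
    zzCoeff t n
  have hsum : Summable (fourierCoeff (⇑H)) := by
    refine Summable.congr (f := fun n : ℤ => ((zzA (t + 2 * π * n) : ℝ) : ℂ)) ?_
      (fun n => (hcoeff n).symm)
    exact Complex.summable_ofReal.mpr (zzA_summable t)
  have h0 := has_pointwise_sum_fourier_series_of_summable hsum ((θ : ℝ) : AddCircle (1:ℝ))
  have h1 := h0.mul_left (Complex.exp (Complex.I * x * t))
  have hterm : ∀ n : ℤ, Complex.exp (Complex.I * x * t)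
        * (fourierCoeff (⇑H) n • fourier n ((θ : ℝ) : AddCircle (1:ℝ)))
      = ((zzA (t + 2 * π * n) : ℝ) : ℂ)
        * Complex.exp (Complex.I * x * ((t + 2 * π * (n:ℝ) : ℝ) : ℂ)) := by
    intro n
    rw [hcoeff n, smul_eq_mul, fourier_coe_apply]
    rw [mul_left_comm]
    congr 1
    rw [show Complex.I * (x:ℂ) * ((t + 2 * π * (n:ℝ) : ℝ) : ℂ)
        = (Complex.I * x * t + 2 * (π:ℂ) * Complex.I * n * θ / ((1:ℝ):ℂ))
          + ((n * ⌊x⌋ : ℤ) : ℂ) * (2 * π * Complex.I) from by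
      push_cast
      rw [hxθ]
      push_cast
      ring]
    rw [Complex.exp_add, Complex.exp_int_mul_two_pi_mul_I, mul_one, Complex.exp_add]
  have he : Complex.exp (Complex.I * θ * t) * Complex.exp (-(Complex.I * θ * t)) = 1 := by
    rw [← Complex.exp_add]
    simp
  have hval : Complex.exp (Complex.I * x * t) * H ((θ : ℝ) : AddCircle (1:ℝ))
      = (1 - ((θ : ℝ) : ℂ)) * Complex.exp (Complex.I * ((⌊x⌋ : ℝ) : ℂ) * t)
        + ((θ : ℝ) : ℂ) * Complex.exp (Complex.I * (((⌊x⌋ : ℝ) : ℂ) + 1) * t) := by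
    show Complex.exp (Complex.I * x * t) * (AddCircle.liftIco 1 0 (zzF t) ((θ : ℝ) : AddCircle (1:ℝ)))
      = _
    rw [AddCircle.liftIco_coe_apply hθ]
    unfold zzF
    rw [show Complex.I * (x:ℂ) * (t:ℂ)
        = Complex.I * ((θ:ℝ):ℂ) * t + Complex.I * ((⌊x⌋ : ℝ) : ℂ) * t from by
      rw [hxθ]; ring]
    rw [Complex.exp_add]
    rw [show Complex.I * ((((⌊x⌋ : ℝ)) : ℂ) + 1) * (t:ℂ)
        = Complex.I * (t:ℂ) + Complex.I * ((⌊x⌋ : ℝ) : ℂ) * t from by ring]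
    rw [Complex.exp_add]
    linear_combination (Complex.exp (Complex.I * ((⌊x⌋ : ℝ) : ℂ) * t)
      * ((1 - ((θ:ℝ):ℂ)) + ((θ:ℝ):ℂ) * Complex.exp (Complex.I * t))) * he
  rw [show (fun n : ℤ => ((zzA (t + 2 * π * n) : ℝ) : ℂ)
        * Complex.exp (Complex.I * x * ((t + 2 * π * (n:ℝ) : ℝ) : ℂ)))
      = fun n : ℤ => Complex.exp (Complex.I * x * t)
        * (fourierCoeff (⇑H) n • fourier n ((θ : ℝ) : AddCircle (1:ℝ))) from
    funext fun n => (hterm n).symm]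
  rw [← hval]
  exact h1

theorem zz_hasSum_one (t : ℝ) : HasSum (fun n : ℤ => zzA (t + 2 * π * n)) 1 := by
  have h := zz_hasSum t 0
  simp only [Int.fract_zero, Int.floor_zero, Complex.ofReal_zero, Int.cast_zero, mul_zero,
    zero_mul, Complex.exp_zero, mul_one, sub_zero, one_mul, zero_add, zero_mul, add_zero] at h
  rw [show (1:ℂ) = ((1:ℝ):ℂ) by norm_num] at h
  exact Complex.hasSum_ofReal.mp h

/-! Main theorem. -/

/-- Theorem 2 for `W⁺`: If `f` is the Fourier–Stieltjes transform of a
finite positive measure `μ` (so `f ∈ W⁺(ℝ)`), then the piecewise linear interpolant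
`ℓ_f` of `f` at the integers is the Fourier–Stieltjes transform of a finite positive
measure `ν` with `ν(ℝ) ≤ μ(ℝ)`, i.e. `ℓ_f ∈ W⁺(ℝ)` with `‖ℓ_f‖_W ≤ ‖f‖_W`. -/
theorem zigzag_of_positive_definite
    (μ : Measure ℝ) [IsFiniteMeasure μ]
    (f : ℝ → ℂ)
    (hf : ∀ x : ℝ, f x = ∫ t : ℝ, Complex.exp (Complex.I * x * t) ∂μ)
    (ℓ : ℝ → ℂ)
    (hℓ : ∀ x : ℝ, ℓ x = (1 - ((Int.fract x : ℝ) : ℂ)) * f (⌊x⌋ : ℝ)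
      + ((Int.fract x : ℝ) : ℂ) * f ((⌊x⌋ : ℝ) + 1)) :
    ∃ ν : Measure ℝ, IsFiniteMeasure ν ∧
      (∀ x : ℝ, ℓ x = ∫ t : ℝ, Complex.exp (Complex.I * x * t) ∂ν) ∧
      ν Set.univ ≤ μ Set.univ := by
  classical
  set w : ℤ → ℝ → ℝ≥0 := fun n t => Real.toNNReal (zzA (t + 2 * π * n)) with hw_def
  have wmeas : ∀ n : ℤ, Measurable (w n) := fun n =>
    (zzA_measurable.comp (measurable_add_const _)).real_toNNReal
  set m : ℤ → Measure ℝ := fun n =>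
    ((μ.withDensity fun t => ((w n t : ℝ≥0) : ℝ≥0∞)).map fun t => t + 2 * π * n) with hm_def
  set ν : Measure ℝ := Measure.sum m with hν_def
  have htsum1 : ∀ t : ℝ, (∑' n : ℤ, ((w n t : ℝ≥0) : ℝ≥0∞)) = 1 := by
    intro t
    have h := zz_hasSum_one t
    have h2 := ENNReal.ofReal_tsum_of_nonneg (fun n : ℤ => zzA_nonneg (t + 2 * π * n)) h.summable
    rw [h.tsum_eq] at h2
    have h3 : ∀ n : ℤ, ((w n t : ℝ≥0) : ℝ≥0∞) = ENNReal.ofReal (zzA (t + 2 * π * n)) :=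
      fun n => rfl
    simp only [h3]
    rw [← h2]
    norm_num
  have hkey : (∑' n : ℤ, ∫⁻ t, ((w n t : ℝ≥0) : ℝ≥0∞) ∂μ) = μ Set.univ := by
    rw [← lintegral_tsum (fun n => ((wmeas n).coe_nnreal_ennreal).aemeasurable)]
    rw [lintegral_congr htsum1, lintegral_one]
  have hmassn : ∀ n : ℤ, m n Set.univ = ∫⁻ t, ((w n t : ℝ≥0) : ℝ≥0∞) ∂μ := by
    intro n
    simp only [hm_def]
    rw [Measure.map_apply (measurable_add_const _) MeasurableSet.univ]
    simp [withDensity_apply _ MeasurableSet.univ]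
  have hmass : ν Set.univ = μ Set.univ := by
    rw [hν_def, Measure.sum_apply _ MeasurableSet.univ]
    simp_rw [hmassn]
    exact hkey
  haveI hfinν : IsFiniteMeasure ν := ⟨by rw [hmass]; exact measure_lt_top μ _⟩
  have hgc : ∀ c : ℝ, Continuous fun s : ℝ => Complex.exp (Complex.I * c * s) := by
    intro c
    fun_prop
  have hgnorm : ∀ c s : ℝ, ‖Complex.exp (Complex.I * c * s)‖ = 1 := by
    intro c s
    rw [Complex.norm_exp]
    simp
  have hintc : ∀ (ρ : Measure ℝ) [IsFiniteMeasure ρ], ∀ c : ℝ,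
      Integrable (fun s : ℝ => Complex.exp (Complex.I * c * s)) ρ := by
    intro ρ _ c
    refine Integrable.mono' (integrable_const (1:ℝ)) ((hgc c).aestronglyMeasurable)
      (ae_of_all _ fun s => ?_)
    rw [hgnorm]
  refine ⟨ν, hfinν, fun x => ?_, hmass.le⟩
  set F : ℤ → ℝ → ℂ := fun n t => ((zzA (t + 2 * π * n) : ℝ) : ℂ) *
      Complex.exp (Complex.I * x * ((t + 2 * π * (n:ℝ) : ℝ) : ℂ)) with hF_def
  have hFmeas : ∀ n : ℤ, AEStronglyMeasurable (F n) μ := by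
    intro n
    refine ((Complex.measurable_ofReal.comp
      (zzA_measurable.comp (measurable_add_const _))).mul ?_).aestronglyMeasurable
    exact ((hgc x).comp (continuous_id.add continuous_const)).measurable
  have hnn : ∀ (n : ℤ) (t : ℝ), (‖F n t‖₊ : ℝ≥0∞) = ((w n t : ℝ≥0) : ℝ≥0∞) := by
    intro n t
    congr 1
    rw [hF_def]
    simp only [nnnorm_mul]
    have h1 : ‖(((zzA (t + 2 * π * n)) : ℝ) : ℂ)‖₊ = w n t := by
      rw [Complex.nnnorm_real]
      exact (Real.toNNReal_eq_nnnorm_of_nonneg (zzA_nonneg _)).symm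
    have h2 : ‖Complex.exp (Complex.I * x * ((t + 2 * π * (n:ℝ) : ℝ) : ℂ))‖₊ = 1 := by
      apply NNReal.coe_injective
      rw [coe_nnnorm]
      exact (hgnorm x (t + 2 * π * n)).trans (by norm_num)
    rw [h1, h2, mul_one]
  have hFlint : (∑' n : ℤ, ∫⁻ t, ‖F n t‖₊ ∂μ) ≠ ⊤ := by
    have : ∀ n : ℤ, (∫⁻ t, (‖F n t‖₊ : ℝ≥0∞) ∂μ) = ∫⁻ t, ((w n t : ℝ≥0) : ℝ≥0∞) ∂μ :=
      fun n => lintegral_congr (hnn n)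
    simp_rw [this, hkey]
    exact measure_ne_top μ _
  have hstep : ∀ n : ℤ, (∫ s, Complex.exp (Complex.I * x * s) ∂(m n)) = ∫ t, F n t ∂μ := by
    intro n
    simp only [hm_def]
    rw [integral_map (measurable_add_const _).aemeasurable ((hgc x).aestronglyMeasurable)]
    rw [integral_withDensity_eq_integral_smul (wmeas n)]
    congr 1
    funext t
    rw [hF_def, NNReal.smul_def, Real.coe_toNNReal _ (zzA_nonneg _), Complex.real_smul]
  have hi1 : Integrable (fun t : ℝ => Complex.exp (Complex.I * ((⌊x⌋ : ℝ) : ℂ) * t)) μ :=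
    hintc μ ((⌊x⌋ : ℤ) : ℝ)
  have hi2 : Integrable (fun t : ℝ => Complex.exp (Complex.I * (((⌊x⌋ : ℝ) : ℂ) + 1) * t)) μ := by
    have := hintc μ (((⌊x⌋ : ℤ) : ℝ) + 1)
    refine this.congr (ae_of_all _ fun t => ?_)
    push_cast
    ring_nf
  rw [hℓ x, hf ((⌊x⌋ : ℤ) : ℝ), hf (((⌊x⌋ : ℤ) : ℝ) + 1), eq_comm]
  rw [hν_def]
  rw [integral_sum_measure (hν_def ▸ hintc ν x)]
  rw [tsum_congr hstep]
  rw [← integral_tsum hFmeas hFlint]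
  rw [integral_congr_ae (ae_of_all _ fun t => (zz_hasSum t x).tsum_eq)]
  rw [integral_add ((hi1.const_mul _)) ((hi2.const_mul _)), integral_const_mul,
    integral_const_mul]
  push_cast
  ring_nf
end

section
/- Let g ∈ L¹(ℝ) (complex-valued) and let f(x) = ∫_ℝ e^{ixy} g(y) dy, so f ∈ W₀(ℝ). Let ℓ_f : ℝ → ℂ be the piecewise linear continuous function interpolating f at the integers: ℓ_f(x) = (1 − (x − ⌊x⌋)) f(⌊x⌋) + (x − ⌊x⌋) f(⌊x⌋ + 1). Then there exists h ∈ L¹(ℝ) such that ℓ_f(x) = ∫_ℝ e^{ixy} h(y) dy for all x ∈ ℝ, and ‖h‖_{L¹} ≤ ‖g‖_{L¹}; that is, ℓ_f ∈ W₀(ℝ) with ‖ℓ_f‖_{W₀} ≤ ‖f‖_{W₀}. -/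
open MeasureTheory Real Filter Complex
open scoped ENNReal NNReal


noncomputable def Phi (y : ℝ) : ℝ := 4 * Real.sin (y/2)^2 / y^2

noncomputable def Wf (u : ℝ) : ℝ → ℂ := fun x =>
  Complex.exp (-(Complex.I * u * x)) * ((1 - (x:ℂ)) + (x:ℂ) * Complex.exp (Complex.I * u))

lemma I3 : (Complex.I)^3 = -Complex.I := by
  rw [pow_succ, Complex.I_sq]; ring
lemma I4 : (Complex.I)^4 = 1 := by
  rw [show (4:ℕ) = 2*2 by rfl, pow_mul, Complex.I_sq]; ring

theorem coef (u : ℝ) (n : ℤ) (ha : u + 2*π*n ≠ 0) :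
    fourierCoeffOn (zero_lt_one) (Wf u) n = (Phi (u + 2*π*n) : ℂ) := by
  rw [fourierCoeffOn_eq_integral]
  simp only [fourier_coe_apply, sub_zero, one_smul, smul_eq_mul, Int.cast_neg,
    Complex.ofReal_one, div_one]
  set a : ℝ := u + 2*π*n with hadef
  set A : ℂ := (a : ℂ) with hA'
  have hA : A ≠ 0 := by rw [hA']; exact Complex.ofReal_ne_zero.mpr ha
  set E : ℂ := Complex.exp (Complex.I * u) with hE
  set E' : ℂ := Complex.exp (-(Complex.I * u)) with hE'
  have hEE' : E * E' = 1 := by rw [hE, hE', ← Complex.exp_add]; simp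
  set β : ℂ := Complex.I * (E - 1) / A with hβ
  set α : ℂ := -Complex.I * (β - 1) / A with hα
  -- step 1: rewrite the integrand
  have hint : ∀ x : ℝ, Complex.exp (2 * ↑π * Complex.I * -(n:ℂ) * (x:ℂ)) * Wf u x
      = Complex.exp (-(Complex.I * A * x)) * ((1 - (x:ℂ)) + (x:ℂ) * E) := by
    intro x
    rw [Wf]
    rw [← mul_assoc, ← Complex.exp_add]
    congr 2
    push_cast [hA', hadef]
    ring
  rw [intervalIntegral.integral_congr (g := fun x : ℝ =>
      Complex.exp (-(Complex.I * A * x)) * ((1 - (x:ℂ)) + (x:ℂ) * E)) (fun x _ => hint x)]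
  -- step 2: antiderivative
  set GG : ℝ → ℂ := fun x => Complex.exp (-(Complex.I * A * x)) * (α + β * x) with hGG
  have hder : ∀ x : ℝ, HasDerivAt GG
      (Complex.exp (-(Complex.I * A * x)) * ((1 - (x:ℂ)) + (x:ℂ) * E)) x := by
    intro x
    have he : HasDerivAt (fun z : ℂ => Complex.exp (-(Complex.I * A * z)))
        (-(Complex.I * A) * Complex.exp (-(Complex.I * A * x))) (x : ℂ) := by
      simpa [mul_comm] using (((hasDerivAt_id (x:ℂ)).const_mul (-(Complex.I * A)))).cexp
    have hp : HasDerivAt (fun z : ℂ => α + β * z) β (x : ℂ) := by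
      simpa using ((hasDerivAt_id (x:ℂ)).const_mul β).const_add α
    have hh := (he.mul hp).comp_ofReal
    have hval : -(Complex.I * A) * Complex.exp (-(Complex.I * A * x)) * (α + β * x)
        + Complex.exp (-(Complex.I * A * x)) * β
        = Complex.exp (-(Complex.I * A * x)) * ((1 - (x:ℂ)) + (x:ℂ) * E) := by
      rw [hα, hβ]
      field_simp
      ring_nf
      simp only [Complex.I_sq, I3, I4]
      ring
    rw [← hval]
    exact hh
  have hcont : IntervalIntegrable (fun x : ℝ =>
      Complex.exp (-(Complex.I * A * x)) * ((1 - (x:ℂ)) + (x:ℂ) * E)) volume 0 1 := by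
    apply Continuous.intervalIntegrable
    fun_prop
  rw [intervalIntegral.integral_eq_sub_of_hasDerivAt (fun x _ => hder x) hcont]
  -- step 3: evaluate
  have hexpA : Complex.exp (-(Complex.I * A)) = E' := by
    rw [hE', hA', hadef]
    push_cast
    rw [show -(Complex.I * ((u:ℂ) + 2*(π:ℂ)*(n:ℂ)))
        = -(Complex.I * u) + (-n : ℤ) * (2 * π * Complex.I) by push_cast; ring]
    rw [Complex.exp_add, Complex.exp_int_mul_two_pi_mul_I, mul_one]
  have h3 : E + E' = 2 * Complex.cos u := by
    rw [hE, hE', Complex.cos]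
    ring_nf
  have h1 : Real.cos a = 1 - 2 * Real.sin (a/2)^2 := by
    have h := Real.cos_two_mul' (a/2)
    rw [show 2*(a/2) = a by ring] at h
    have h2 := Real.sin_sq_add_cos_sq (a/2)
    linarith
  have h2 : Real.cos a = Real.cos u := by
    rw [hadef, show u + 2*π*n = u + n * (2*π) by ring, Real.cos_add_int_mul_two_pi]
  have hPhi : (Phi a : ℂ) = (2 - E - E') / A^2 := by
    have hp1 : Phi a = (2 - 2*Real.cos u)/a^2 := by
      rw [Phi]
      rw [show 4 * Real.sin (a/2)^2 = 2 - 2*Real.cos u by rw [← h2]; linarith]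
    rw [hp1]
    push_cast [Complex.ofReal_cos]
    rw [show ((2:ℂ) - 2*Complex.cos u) = 2 - E - E' by linear_combination h3]
  rw [hGG, hPhi]
  simp only [Complex.ofReal_zero, Complex.ofReal_one, mul_zero, mul_one, neg_zero,
    Complex.exp_zero, one_mul, add_zero]
  rw [hexpA, hα, hβ]
  field_simp
  ring_nf
  simp only [Complex.I_sq, I3, I4]
  ring_nf
  linear_combination (1 + Complex.I*A) * hEE'


lemma phi_nonneg (y : ℝ) : 0 ≤ Phi y := by
  rw [Phi]; positivity

lemma phi_le_one (y : ℝ) : Phi y ≤ 1 := by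
  rcases eq_or_ne y 0 with h | h
  · simp [Phi, h]
  · rw [Phi, div_le_one (by positivity)]
    have := Real.sin_sq_le_sq (x := y/2)
    nlinarith

lemma phi_le_four_div (y : ℝ) : Phi y ≤ 4 / y^2 := by
  rcases eq_or_ne y 0 with h | h
  · simp [Phi, h]
  · rw [Phi]
    have hy : (0:ℝ) < y^2 := by positivity
    rw [div_le_div_iff₀ hy hy]
    nlinarith [Real.sin_sq_le_one (y/2)]

lemma summable_phi_int (u : ℝ) : Summable (fun n : ℤ => Phi (u + 2*π*n)) := by
  have hπ := Real.pi_pos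
  set m : ℤ := round ((-u)/(2*π)) with hm
  have h2 : |u + 2*π*(m:ℝ)| ≤ π := by
    have h1 := abs_sub_round ((-u)/(2*π))
    have he : u + 2*π*(m:ℝ) = -(((-u)/(2*π) - (m:ℝ)) * (2*π)) := by
      field_simp
      ring
    rw [he, abs_neg, abs_mul, abs_of_pos (by positivity : (0:ℝ) < 2*π)]
    rw [← hm] at h1
    nlinarith [abs_nonneg ((-u)/(2*π) - (m:ℝ))]
  have hsum1 : Summable (fun n : ℤ => 4 / (π^2 * ((n:ℝ) - m)^2)) := by
    have base : Summable (fun n : ℤ => (4/π^2) * (1 / (n:ℝ)^2)) :=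
      (summable_one_div_int_pow.mpr one_lt_two).mul_left _
    have hc := base.comp_injective (Equiv.subRight m).injective
    apply Summable.congr hc
    intro n
    simp only [Function.comp_apply, Equiv.subRight_apply]
    push_cast
    rw [div_mul_div_comm, mul_one]
  have hsum2 : Summable (fun n : ℤ => if n = m then (1:ℝ) else 0) :=
    (hasSum_ite_eq m (1:ℝ)).summable
  apply Summable.of_nonneg_of_le (fun n => phi_nonneg _) _ (hsum1.add hsum2)
  intro n
  rcases eq_or_ne n m with h | hnm
  · rw [h]
    simp only [if_pos rfl, sub_self]
    norm_num
    exact phi_le_one _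
  · simp only [if_neg hnm, add_zero]
    refine (phi_le_four_div _).trans ?_
    have h3 : (1:ℝ) ≤ |(n:ℝ) - (m:ℝ)| := by
      have h := Int.one_le_abs (sub_ne_zero.mpr hnm)
      have h' : ((1:ℤ):ℝ) ≤ ((|n - m|:ℤ):ℝ) := by exact_mod_cast h
      rw [Int.cast_abs] at h'
      push_cast at h'
      exact h'
    have h4 : π * |(n:ℝ) - m| ≤ |u + 2*π*n| := by
      have he : u + 2*π*(n:ℝ) = 2*π*((n:ℝ)-m) - (-(u + 2*π*(m:ℝ))) := by ring
      calc π * |(n:ℝ) - m| ≤ 2*π*|(n:ℝ)-m| - π := by nlinarith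
      _ ≤ |2*π*((n:ℝ)-m)| - |(-(u + 2*π*(m:ℝ)))| := by
          rw [abs_mul, abs_of_pos (by positivity : (0:ℝ) < 2*π), abs_neg]
          linarith
      _ ≤ |2*π*((n:ℝ)-m) - (-(u + 2*π*(m:ℝ)))| := abs_sub_abs_le_abs_sub _ _
      _ = |u + 2*π*n| := by rw [← he]
    have habs : (0:ℝ) < |(n:ℝ) - m| := lt_of_lt_of_le one_pos h3
    have hpos : (0:ℝ) < π^2 * ((n:ℝ)-m)^2 := by
      have hs : ((n:ℝ)-m)^2 = |(n:ℝ)-m|^2 := (_root_.sq_abs _).symm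
      rw [hs]; positivity
    have h5 : (0:ℝ) < |u + 2*π*(n:ℝ)| := by nlinarith
    have h6 : (0:ℝ) < (u + 2*π*(n:ℝ))^2 := by
      rw [← _root_.sq_abs]; positivity
    rw [div_le_div_iff₀ h6 hpos]
    have hq : π^2*((n:ℝ)-m)^2 ≤ (u + 2*π*n)^2 := by
      have h0 : (0:ℝ) ≤ π * |(n:ℝ)-m| := by positivity
      have e1 : π^2*((n:ℝ)-m)^2 = (π * |(n:ℝ)-m|)^2 := by
        rw [mul_pow, _root_.sq_abs]
      rw [e1, ← _root_.sq_abs (u + 2*π*(n:ℝ))]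
      exact pow_le_pow_left₀ h0 h4 2
    nlinarith

lemma sin_ne_of (u : ℝ) (hu : Real.sin (u/2) ≠ 0) (n : ℤ) : u + 2*π*n ≠ 0 := by
  intro h
  apply hu
  have : u/2 = (-n : ℤ) * π := by push_cast; linarith
  rw [this, Real.sin_int_mul_pi]

theorem kernel_hasSum (u : ℝ) (hu : Real.sin (u/2) ≠ 0) (x : ℝ) :
    HasSum (fun k : ℤ => Complex.exp (Complex.I * x * (u - 2*π*k)) * ((Phi (u - 2*π*k) : ℝ) : ℂ))
      ((1 - ((Int.fract x : ℝ) : ℂ)) * Complex.exp (Complex.I * ((⌊x⌋:ℝ):ℂ) * u)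
        + ((Int.fract x : ℝ) : ℂ) * Complex.exp (Complex.I * (((⌊x⌋:ℝ):ℂ)+1) * u)) := by
  haveI : Fact ((0:ℝ) < 1) := ⟨one_pos⟩
  set t : ℝ := Int.fract x with htdef
  have ht : t ∈ Set.Ico (0:ℝ) 1 := ⟨Int.fract_nonneg x, Int.fract_lt_one x⟩
  have hW01 : Wf u 0 = Wf u (0 + 1) := by
    have e0 : Wf u 0 = 1 := by simp [Wf]
    have e1 : Wf u (0 + 1) = 1 := by
      simp [Wf]
      rw [← Complex.exp_add]
      simp
    rw [e0, e1]
  have hWcont : Continuous (Wf u) := by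
    apply Continuous.mul
    · apply Complex.continuous_exp.comp
      fun_prop
    · fun_prop
  set F : C(AddCircle (1:ℝ), ℂ) :=
    ⟨AddCircle.liftIco 1 0 (Wf u),
      AddCircle.liftIco_continuous hW01 hWcont.continuousOn⟩ with hF
  have hcoef : ∀ n : ℤ, fourierCoeff (⇑F) n = ((Phi (u + 2*π*n) : ℝ) : ℂ) := by
    intro n
    have h1 : fourierCoeff (AddCircle.liftIco 1 0 (Wf u)) n
        = fourierCoeffOn (by norm_num : (0:ℝ) < 0 + 1) (Wf u) n :=
      fourierCoeff_liftIco_eq (Wf u) n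
    have h2 : fourierCoeffOn (by norm_num : (0:ℝ) < 0 + 1) (Wf u) n
        = fourierCoeffOn zero_lt_one (Wf u) n := by
      congr 1 <;> norm_num
    rw [hF]
    show fourierCoeff (AddCircle.liftIco 1 0 (Wf u)) n = _
    rw [h1, h2, coef u n (sin_ne_of u hu n)]
  have hsummable : Summable (fourierCoeff (⇑F)) := by
    rw [funext hcoef]
    exact (Complex.summable_ofReal).mpr (summable_phi_int u)
  have hps := has_pointwise_sum_fourier_series_of_summable hsummable ((t : AddCircle (1:ℝ)))
  have hFt : F ((t : AddCircle (1:ℝ))) = Wf u t := by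
    show AddCircle.liftIco 1 0 (Wf u) _ = _
    exact AddCircle.liftIco_coe_apply (show t ∈ Set.Ico (0:ℝ) (0+1) by rw [zero_add]; exact ht)
  rw [hFt] at hps
  simp only [hcoef, fourier_coe_apply, Complex.ofReal_one, div_one, smul_eq_mul] at hps
  -- reindex by negation
  have hps2 := (Equiv.neg ℤ).hasSum_iff.mpr hps
  simp only [Function.comp_def, Equiv.neg_apply, Int.cast_neg] at hps2
  -- multiply by the constant
  set C : ℂ := Complex.exp (Complex.I * ((⌊x⌋:ℝ):ℂ) * u + Complex.I * t * u) with hC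
  have hps3 := hps2.mul_left C
  have hxflo : x = (⌊x⌋ : ℝ) + t := (Int.floor_add_fract x).symm
  convert hps3 using 1
  · rfl
  · funext k
    rw [show (u + 2 * π * (-(k:ℝ))) = u - 2*π*(k:ℝ) by ring]
    have hkey : Complex.exp (Complex.I * x * (u - 2*π*k))
        = C * Complex.exp (2 * π * Complex.I * (-(k:ℂ)) * t) := by
      rw [hC, ← Complex.exp_add]
      rw [show Complex.I * (x:ℂ) * ((u:ℂ) - 2*π*k)
          = (Complex.I * ((⌊x⌋:ℝ):ℂ) * u + Complex.I * (t:ℂ) * u + 2 * π * Complex.I * (-(k:ℂ)) * t)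
            + ((-(k * ⌊x⌋) : ℤ) : ℂ) * (2 * π * Complex.I) by
        have hx' : (x:ℂ) = ((⌊x⌋:ℝ):ℂ) + (t:ℂ) := by exact_mod_cast congrArg Complex.ofReal hxflo
        rw [hx']
        push_cast
        ring]
      rw [Complex.exp_add, Complex.exp_int_mul_two_pi_mul_I, mul_one]
    rw [hkey]
    ring
  · -- value equality
    rw [hC, Wf]
    rw [← mul_assoc, ← Complex.exp_add]
    rw [show Complex.I * ((⌊x⌋:ℝ):ℂ) * u + Complex.I * (t:ℂ) * u + -(Complex.I * u * t)
        = Complex.I * ((⌊x⌋:ℝ):ℂ) * u by ring]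
    rw [show Complex.I * (((⌊x⌋:ℝ):ℂ) + 1) * u
        = Complex.I * ((⌊x⌋:ℝ):ℂ) * u + Complex.I * u by ring, Complex.exp_add]
    ring

lemma hasSum_phi (u : ℝ) (hu : Real.sin (u/2) ≠ 0) :
    HasSum (fun k : ℤ => Phi (u - 2*π*k)) 1 := by
  have h := kernel_hasSum u hu 0
  have h2 : HasSum (fun k : ℤ => ((Phi (u - 2*π*k) : ℝ):ℂ)) (((1:ℝ):ℂ)) := by
    convert h using 1
    · funext k
      rw [show Complex.I * ((0:ℝ):ℂ) * ((u:ℂ) - 2*π*(k:ℂ)) = 0 by push_cast; ring,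
        Complex.exp_zero, one_mul]
    · simp
  exact Complex.hasSum_ofReal.mp h2

lemma ae_sin_ne : ∀ᵐ (u:ℝ), Real.sin (u/2) ≠ 0 := by
  have hcnt : (Set.range (fun k : ℤ => (2*π*k : ℝ))).Countable := Set.countable_range _
  have hz := hcnt.measure_zero volume
  rw [ae_iff]
  apply measure_mono_null _ hz
  intro u hu
  simp only [Set.mem_setOf_eq, not_not] at hu
  rcases Real.sin_eq_zero_iff.mp hu with ⟨n, hn⟩
  exact ⟨n, by simp only []; linear_combination 2*hn⟩

lemma nnnorm_exp_phi (c y z : ℝ) :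
    (‖Complex.exp (Complex.I * c * y) * ((Phi z : ℝ) : ℂ)‖₊ : ℝ≥0∞) = ENNReal.ofReal (Phi z) := by
  have h1 : ‖Complex.exp (Complex.I * c * y)‖ = 1 := by
    rw [show Complex.I * (c:ℂ) * (y:ℂ) = ((c*y : ℝ):ℂ) * Complex.I by push_cast; ring]
    exact Complex.norm_exp_ofReal_mul_I _
  rw [← enorm_eq_nnnorm, ← ofReal_norm, norm_mul, h1, one_mul, Complex.norm_real,
    Real.norm_of_nonneg (phi_nonneg z)]

lemma norm_exp_eq_one (c y : ℝ) : ‖Complex.exp (Complex.I * c * y)‖ = 1 := by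
  rw [show Complex.I * (c:ℂ) * (y:ℂ) = ((c*y : ℝ):ℂ) * Complex.I by push_cast; ring]
  exact Complex.norm_exp_ofReal_mul_I _

/-- Theorem 2 for `W₀`: If `f` is the Fourier transform of `g ∈ L¹(ℝ)`
(so `f ∈ W₀(ℝ)`), then the piecewise linear interpolant `ℓ_f` of `f` at the integers
is the Fourier transform of some `h ∈ L¹(ℝ)` with `‖h‖₁ ≤ ‖g‖₁`, i.e.
`ℓ_f ∈ W₀(ℝ)` with `‖ℓ_f‖_{W₀} ≤ ‖f‖_{W₀}`. -/
theorem zigzag_of_wiener_W0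
    (g : ℝ → ℂ) (hg : Integrable g)
    (f : ℝ → ℂ)
    (hf : ∀ x : ℝ, f x = ∫ y : ℝ, Complex.exp (Complex.I * x * y) * g y)
    (ℓ : ℝ → ℂ)
    (hℓ : ∀ x : ℝ, ℓ x = (1 - ((Int.fract x : ℝ) : ℂ)) * f (⌊x⌋ : ℝ)
      + ((Int.fract x : ℝ) : ℂ) * f ((⌊x⌋ : ℝ) + 1)) :
    ∃ h : ℝ → ℂ, Integrable h ∧
      (∀ x : ℝ, ℓ x = ∫ y : ℝ, Complex.exp (Complex.I * x * y) * h y) ∧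
      (∫ y : ℝ, ‖h y‖) ≤ ∫ y : ℝ, ‖g y‖ := by
  classical
  have hπ := Real.pi_pos
  set g₀ : ℝ → ℂ := hg.1.mk g with hg₀def
  have hg₀sm : StronglyMeasurable g₀ := hg.1.stronglyMeasurable_mk
  have hgg₀ : g =ᵐ[volume] g₀ := hg.1.ae_eq_mk
  have hg₀meas : Measurable g₀ := hg₀sm.measurable
  have hg₀ : Integrable g₀ := hg.congr hgg₀
  have hPhiMeas : Measurable Phi := by
    unfold Phi
    fun_prop
  set G : ℤ → ℝ → ℂ := fun k y => g₀ (y + 2*π*k) with hGdef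
  have hGmeas : ∀ k, Measurable (G k) := fun k => hg₀meas.comp (measurable_add_const _)
  set w : ℝ → ℝ≥0∞ := fun y => ENNReal.ofReal (Phi y) with hw
  have hwmeas : Measurable w := hPhiMeas.ennreal_ofReal
  -- translation identity for lintegrals
  have htrans : ∀ k : ℤ, (∫⁻ y, w y * ‖G k y‖₊)
      = ∫⁻ u, ENNReal.ofReal (Phi (u - 2*π*k)) * ‖g₀ u‖₊ := by
    intro k
    rw [← lintegral_add_right_eq_self
      (f := fun u => ENNReal.ofReal (Phi (u - 2*π*k)) * (‖g₀ u‖₊ : ℝ≥0∞)) (2*π*k)]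
    apply lintegral_congr
    intro y
    simp only [add_sub_cancel_right, hw, hGdef]
  -- a.e. sum of translated Phi equals 1
  have hone : ∀ᵐ (u:ℝ), (∑' k : ℤ, ENNReal.ofReal (Phi (u - 2*π*k))) = 1 := by
    filter_upwards [ae_sin_ne] with u hu
    rw [← ENNReal.ofReal_tsum_of_nonneg (fun k => phi_nonneg _) (hasSum_phi u hu).summable,
      (hasSum_phi u hu).tsum_eq, ENNReal.ofReal_one]
  have hmid : (∑' k : ℤ, ∫⁻ u, ENNReal.ofReal (Phi (u - 2*π*k)) * ‖g₀ u‖₊)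
      = ∫⁻ u, ‖g₀ u‖₊ := by
    have hswap := lintegral_tsum (μ := volume)
      (f := fun (k:ℤ) (u:ℝ) => ENNReal.ofReal (Phi (u - 2*π*k)) * (‖g₀ u‖₊ : ℝ≥0∞))
      (fun k => (((hPhiMeas.comp (measurable_sub_const (2*π*(k:ℝ)))).ennreal_ofReal).mul
        hg₀meas.nnnorm.coe_nnreal_ennreal).aemeasurable)
    rw [← hswap]
    apply lintegral_congr_ae
    filter_upwards [hone] with u hu
    rw [ENNReal.tsum_mul_right, hu, one_mul]
  have hsum_eq : (∑' k : ℤ, ∫⁻ y, w y * ‖G k y‖₊) = ∫⁻ u, ‖g₀ u‖₊ := by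
    rw [tsum_congr htrans, hmid]
  have hfin : (∫⁻ u, ‖g₀ u‖₊) ≠ ⊤ := hg₀.2.ne
  -- the function h
  set h : ℝ → ℂ := fun y => ((Phi y : ℝ) : ℂ) * ∑' k : ℤ, G k y with hh
  -- a.e. summability
  have hae_sum : ∀ᵐ (y:ℝ), Summable (fun k : ℤ => G k y) := by
    have hmeas2 : AEMeasurable (fun y => ∑' k : ℤ, w y * ‖G k y‖₊) volume :=
      AEMeasurable.ennreal_tsum (fun k => ((hwmeas.mul (hGmeas k).nnnorm.coe_nnreal_ennreal)).aemeasurable)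
    have hintne : (∫⁻ y, ∑' k : ℤ, w y * ‖G k y‖₊) ≠ ⊤ := by
      rw [lintegral_tsum (f := fun (k:ℤ) (y:ℝ) => w y * (‖G k y‖₊ : ℝ≥0∞)) (fun k => (((hwmeas.mul (hGmeas k).nnnorm.coe_nnreal_ennreal)).aemeasurable :
        AEMeasurable (fun y => w y * (‖G k y‖₊ : ℝ≥0∞)) volume)), hsum_eq]
      exact hfin
    filter_upwards [ae_lt_top' hmeas2 hintne, ae_sin_ne] with y hy hsin
    have hφpos : 0 < Phi y := by
      have h1 : 0 < Real.sin (y/2)^2 :=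
        lt_of_le_of_ne (sq_nonneg _) (Ne.symm (pow_ne_zero 2 hsin))
      have hy0 : y ≠ 0 := by
        intro h0
        apply hsin
        rw [h0]
        simp
      have h2 : 0 < y^2 := by positivity
      rw [Phi]
      positivity
    rw [ENNReal.tsum_mul_left] at hy
    have hwne : w y ≠ 0 := by
      simp only [hw, ne_eq, ENNReal.ofReal_eq_zero, not_le]
      exact hφpos
    have hSfin : (∑' k : ℤ, (‖G k y‖₊ : ℝ≥0∞)) ≠ ⊤ := by
      intro htop
      rw [htop, ENNReal.mul_top hwne] at hy
      exact absurd hy (lt_irrefl _)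
    have := ENNReal.tsum_coe_ne_top_iff_summable.mp hSfin
    exact this.of_nnnorm
  -- strong measurability of h
  have haesm : AEStronglyMeasurable h volume := by
    apply aestronglyMeasurable_of_tendsto_ae (u := atTop)
      (f := fun (n:ℕ) (y:ℝ) => ((Phi y : ℝ):ℂ) * ∑ k ∈ Finset.Icc (-(n:ℤ)) (n:ℤ), G k y)
    · intro n
      apply Measurable.aestronglyMeasurable
      apply Measurable.mul
      · exact (Complex.measurable_ofReal.comp hPhiMeas)
      · exact Finset.measurable_sum _ (fun k _ => hGmeas k)
    · filter_upwards [hae_sum] with y hy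
      have hm : Monotone (fun n : ℕ => Finset.Icc (-(n:ℤ)) (n:ℤ)) := by
        intro a b hab
        apply Finset.Icc_subset_Icc
        · exact neg_le_neg (by exact_mod_cast hab)
        · exact_mod_cast hab
      have hex : Tendsto (fun n : ℕ => Finset.Icc (-(n:ℤ)) (n:ℤ)) atTop atTop :=
        tendsto_atTop_finset_of_monotone hm (fun k => ⟨k.natAbs, by
          simp only [Finset.mem_Icc]
          omega⟩)
      have h2 := hy.hasSum.comp hex
      exact (h2.const_mul _)
  -- norm bound pointwise
  have hbound : ∀ y, (‖h y‖₊ : ℝ≥0∞) ≤ ∑' k : ℤ, w y * ‖G k y‖₊ := by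
    intro y
    rw [ENNReal.tsum_mul_left]
    by_cases hs : Summable (fun k : ℤ => G k y)
    · have hns : Summable (fun k : ℤ => ‖G k y‖) := hs.norm
      have h1 : ‖h y‖ ≤ Phi y * ∑' k, ‖G k y‖ := by
        rw [hh]
        simp only [norm_mul, Complex.norm_real, Real.norm_of_nonneg (phi_nonneg y)]
        exact mul_le_mul_of_nonneg_left (norm_tsum_le_tsum_norm hns) (phi_nonneg y)
      calc (‖h y‖₊ : ℝ≥0∞) = ENNReal.ofReal ‖h y‖ := (ofReal_norm _).symm
        _ ≤ ENNReal.ofReal (Phi y * ∑' k, ‖G k y‖) := ENNReal.ofReal_le_ofReal h1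
        _ = w y * ENNReal.ofReal (∑' k, ‖G k y‖) := by
            rw [ENNReal.ofReal_mul (phi_nonneg y)]
        _ = w y * ∑' k, (‖G k y‖₊ : ℝ≥0∞) := by
            rw [ENNReal.ofReal_tsum_of_nonneg (fun k => norm_nonneg _) hns]
            simp_rw [ofReal_norm, enorm_eq_nnnorm]
    · have h0 : h y = 0 := by
        rw [hh]
        simp [tsum_eq_zero_of_not_summable hs]
      calc (‖h y‖₊ : ℝ≥0∞) = 0 := by rw [h0]; simp
        _ ≤ _ := zero_le
  have hhint : Integrable h := by
    refine ⟨haesm, ?_⟩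
    show (∫⁻ y, (‖h y‖₊ : ℝ≥0∞)) < ⊤
    calc (∫⁻ y, ‖h y‖₊) ≤ ∫⁻ y, ∑' k : ℤ, w y * ‖G k y‖₊ := lintegral_mono hbound
      _ = ∑' k : ℤ, ∫⁻ y, w y * ‖G k y‖₊ :=
          lintegral_tsum (fun k => ((hwmeas.mul (hGmeas k).nnnorm.coe_nnreal_ennreal)).aemeasurable)
      _ = ∫⁻ u, ‖g₀ u‖₊ := hsum_eq
      _ < ⊤ := hfin.lt_top
  refine ⟨h, hhint, ?_, ?_⟩
  · -- the identity
    intro x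
    have hfg₀ : ∀ c : ℝ, (∫ y : ℝ, Complex.exp (Complex.I*c*y) * g y)
        = ∫ y : ℝ, Complex.exp (Complex.I*c*y) * g₀ y := by
      intro c
      apply integral_congr_ae
      filter_upwards [hgg₀] with y hy
      rw [hy]
    have hIe : ∀ c : ℝ, Integrable (fun u : ℝ => Complex.exp (Complex.I*c*u) * g₀ u) := by
      intro c
      apply hg₀.bdd_mul (c := 1)
      · apply Continuous.aestronglyMeasurable
        apply Complex.continuous_exp.comp
        fun_prop
      · exact Eventually.of_forall (fun u => le_of_eq (norm_exp_eq_one c u))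
    have hFmeas : ∀ k : ℤ, AEStronglyMeasurable
        (fun y : ℝ => (Complex.exp (Complex.I*x*y) * ((Phi y:ℝ):ℂ)) * G k y) volume := by
      intro k
      apply Measurable.aestronglyMeasurable
      apply Measurable.mul _ (hGmeas k)
      apply Measurable.mul
      · apply Complex.measurable_exp.comp
        fun_prop
      · exact Complex.measurable_ofReal.comp hPhiMeas
    have hFnorm : ∀ k : ℤ, (∫⁻ (y:ℝ), (‖(Complex.exp (Complex.I*x*y) * ((Phi y:ℝ):ℂ)) * G k y‖₊ : ℝ≥0∞))
        = ∫⁻ (y:ℝ), w y * ‖G k y‖₊ := by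
      intro k
      apply lintegral_congr
      intro y
      rw [nnnorm_mul, ENNReal.coe_mul, nnnorm_exp_phi x y y]
    have hcond1 : (∑' k : ℤ, ∫⁻ (y:ℝ), (‖(Complex.exp (Complex.I*x*y) * ((Phi y:ℝ):ℂ)) * G k y‖₊ : ℝ≥0∞)) ≠ ⊤ := by
      rw [tsum_congr hFnorm, hsum_eq]
      exact hfin
    have stepAB : (∫ y : ℝ, Complex.exp (Complex.I*x*y) * h y)
        = ∑' k : ℤ, ∫ y : ℝ, (Complex.exp (Complex.I*x*y) * ((Phi y:ℝ):ℂ)) * G k y := by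
      rw [← integral_tsum hFmeas hcond1]
      apply integral_congr_ae
      apply Eventually.of_forall
      intro y
      calc Complex.exp (Complex.I*x*y) * h y
          = Complex.exp (Complex.I*x*y) * (((Phi y:ℝ):ℂ) * ∑' k : ℤ, G k y) := rfl
        _ = ∑' k : ℤ, (Complex.exp (Complex.I*x*y) * ((Phi y:ℝ):ℂ)) * G k y := by
            rw [tsum_mul_left]
            ring
    have stepC : ∀ k : ℤ, (∫ y : ℝ, (Complex.exp (Complex.I*x*y) * ((Phi y:ℝ):ℂ)) * G k y)
        = ∫ u : ℝ, (Complex.exp (Complex.I*x*(u - 2*π*k)) * ((Phi (u - 2*π*k):ℝ):ℂ)) * g₀ u := by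
      intro k
      rw [← integral_add_right_eq_self
        (f := fun u : ℝ => (Complex.exp (Complex.I*x*(u - 2*π*k)) * ((Phi (u - 2*π*k):ℝ):ℂ)) * g₀ u)
        (2*π*(k:ℝ))]
      apply integral_congr_ae
      apply Eventually.of_forall
      intro y
      simp only [hGdef]
      rw [show (y + 2*π*(k:ℝ)) - 2*π*(k:ℝ) = y from by ring,
        show ((y + 2*π*(k:ℝ) : ℝ) : ℂ) - 2*(π:ℂ)*(k:ℂ) = (y:ℂ) from by push_cast; ring]
    have hFkmeas : ∀ k : ℤ, AEStronglyMeasurable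
        (fun u : ℝ => (Complex.exp (Complex.I*x*(u - 2*π*k)) * ((Phi (u - 2*π*k):ℝ):ℂ)) * g₀ u) volume := by
      intro k
      apply Measurable.aestronglyMeasurable
      apply Measurable.mul _ hg₀meas
      apply Measurable.mul
      · apply Complex.measurable_exp.comp
        fun_prop
      · exact Complex.measurable_ofReal.comp (hPhiMeas.comp (measurable_sub_const _))
    have hFknorm : ∀ k : ℤ, (∫⁻ (u:ℝ), (‖(Complex.exp (Complex.I*x*(u - 2*π*k)) * ((Phi (u - 2*π*k):ℝ):ℂ)) * g₀ u‖₊ : ℝ≥0∞))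
        = ∫⁻ (u:ℝ), ENNReal.ofReal (Phi (u - 2*π*k)) * ‖g₀ u‖₊ := by
      intro k
      apply lintegral_congr
      intro u
      rw [show Complex.I*(x:ℂ)*((u:ℂ) - 2*(π:ℂ)*(k:ℂ))
          = Complex.I*(x:ℂ)*(((u - 2*π*(k:ℝ) : ℝ)):ℂ) from by push_cast; ring]
      rw [nnnorm_mul, ENNReal.coe_mul, nnnorm_exp_phi]
    have hcond2 : (∑' k : ℤ, ∫⁻ (u:ℝ), (‖(Complex.exp (Complex.I*x*(u - 2*π*k)) * ((Phi (u - 2*π*k):ℝ):ℂ)) * g₀ u‖₊ : ℝ≥0∞)) ≠ ⊤ := by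
      rw [tsum_congr hFknorm, hmid]
      exact hfin
    have stepD : (∑' k : ℤ, ∫ u : ℝ, (Complex.exp (Complex.I*x*(u - 2*π*k)) * ((Phi (u - 2*π*k):ℝ):ℂ)) * g₀ u)
        = ∫ u : ℝ, ∑' k : ℤ, (Complex.exp (Complex.I*x*(u - 2*π*k)) * ((Phi (u - 2*π*k):ℝ):ℂ)) * g₀ u :=
      (integral_tsum hFkmeas hcond2).symm
    have stepE : (∫ u : ℝ, ∑' k : ℤ, (Complex.exp (Complex.I*x*(u - 2*π*k)) * ((Phi (u - 2*π*k):ℝ):ℂ)) * g₀ u)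
        = ∫ u : ℝ, ((1 - ((Int.fract x : ℝ):ℂ)) * Complex.exp (Complex.I * ((⌊x⌋:ℝ):ℂ) * u)
            + ((Int.fract x : ℝ):ℂ) * Complex.exp (Complex.I * (((⌊x⌋:ℝ):ℂ)+1) * u)) * g₀ u := by
      apply integral_congr_ae
      filter_upwards [ae_sin_ne] with u hu
      exact ((kernel_hasSum u hu x).mul_right (g₀ u)).tsum_eq
    have stepF : (∫ u : ℝ, ((1 - ((Int.fract x : ℝ):ℂ)) * Complex.exp (Complex.I * ((⌊x⌋:ℝ):ℂ) * u)
            + ((Int.fract x : ℝ):ℂ) * Complex.exp (Complex.I * (((⌊x⌋:ℝ):ℂ)+1) * u)) * g₀ u)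
        = (1 - ((Int.fract x : ℝ):ℂ)) * (∫ u : ℝ, Complex.exp (Complex.I * ((⌊x⌋:ℝ):ℂ) * u) * g₀ u)
          + ((Int.fract x : ℝ):ℂ) * ∫ u : ℝ, Complex.exp (Complex.I * (((⌊x⌋:ℝ)+1 : ℝ):ℂ) * u) * g₀ u := by
      have hcast : ∀ u : ℝ, Complex.exp (Complex.I * (((⌊x⌋:ℝ):ℂ)+1) * u)
          = Complex.exp (Complex.I * ((((⌊x⌋:ℝ)+1 : ℝ)):ℂ) * u) := by
        intro u
        push_cast
        ring_nf
      have e1 : (fun u : ℝ => ((1 - ((Int.fract x : ℝ):ℂ)) * Complex.exp (Complex.I * ((⌊x⌋:ℝ):ℂ) * u)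
            + ((Int.fract x : ℝ):ℂ) * Complex.exp (Complex.I * (((⌊x⌋:ℝ):ℂ)+1) * u)) * g₀ u)
          = fun u : ℝ => (1 - ((Int.fract x : ℝ):ℂ)) * (Complex.exp (Complex.I * ((⌊x⌋:ℝ):ℂ) * u) * g₀ u)
            + ((Int.fract x : ℝ):ℂ) * (Complex.exp (Complex.I * ((((⌊x⌋:ℝ)+1 : ℝ)):ℂ) * u) * g₀ u) := by
        funext u
        rw [← hcast u]
        ring
      rw [e1]
      rw [integral_add ((hIe (⌊x⌋:ℝ)).const_mul _) ((hIe ((⌊x⌋:ℝ)+1)).const_mul _)]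
      rw [integral_const_mul, integral_const_mul]
    rw [hℓ x, hf ((⌊x⌋:ℝ)), hf (((⌊x⌋:ℝ))+1), hfg₀, hfg₀]
    rw [stepAB, tsum_congr stepC, stepD, stepE, stepF]
  · -- the norm bound
    have e1 : (∫ y, ‖h y‖) = (∫⁻ y, ‖h y‖₊).toReal := integral_norm_eq_lintegral_enorm haesm
    have e2 : (∫ y, ‖g y‖) = (∫⁻ y, ‖g y‖₊).toReal := integral_norm_eq_lintegral_enorm hg.1
    rw [e1, e2]
    apply ENNReal.toReal_mono hg.2.ne
    calc (∫⁻ y, ‖h y‖₊) ≤ ∑' k : ℤ, ∫⁻ y, w y * ‖G k y‖₊ := by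
          rw [← lintegral_tsum (f := fun (k:ℤ) (y:ℝ) => w y * (‖G k y‖₊ : ℝ≥0∞)) (fun k => (((hwmeas.mul (hGmeas k).nnnorm.coe_nnreal_ennreal)).aemeasurable :
            AEMeasurable (fun y => w y * (‖G k y‖₊ : ℝ≥0∞)) volume))]
          exact lintegral_mono hbound
      _ = ∫⁻ u, ‖g₀ u‖₊ := hsum_eq
      _ = ∫⁻ y, ‖g y‖₊ := by
          apply lintegral_congr_ae
          filter_upwards [hgg₀] with y hy
          rw [hy]
end

section
/- For every real y that is not an integer multiple of 2π, Σ_{k∈ℤ} (sin((y + 2kπ)/2))² / (y + 2kπ)² = 1/4. -/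
open Real MeasureTheory Set AddCircle intervalIntegral

set_option maxHeartbeats 1000000
noncomputable section

lemma coeffOn_eq (α : ℝ) (n : ℤ) (h : α - n ≠ 0) :
    fourierCoeffOn (show (0:ℝ) < 0 + 2*π by positivity)
      (fun t : ℝ => Complex.exp (Complex.I * α * t)) n
    = (1/(2*π) : ℂ) * ((Complex.exp (Complex.I * (α - n) * (2*π)) - 1) / (Complex.I * (α - n))) := by
  have hc : (Complex.I * ((α : ℂ) - n)) ≠ 0 := by
    apply mul_ne_zero Complex.I_ne_zero
    exact_mod_cast sub_ne_zero.mpr (fun hh => h (by exact_mod_cast sub_eq_zero.mpr hh))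
  rw [fourierCoeffOn_eq_integral]
  have hint : (∫ x in (0:ℝ)..(0 + 2*π), fourier (-n) (x : AddCircle (0 + 2*π - 0)) •
      Complex.exp (Complex.I * α * x))
      = ∫ x in (0:ℝ)..(2*π), Complex.exp ((Complex.I * (α - n)) * x) := by
    rw [show (0:ℝ) + 2*π = 2*π by ring]
    refine intervalIntegral.integral_congr fun x hx => ?_
    rw [fourier_coe_apply]
    rw [smul_eq_mul, ← Complex.exp_add]
    congr 1
    have hπ : (π : ℂ) ≠ 0 := by exact_mod_cast Real.pi_ne_zero
    field_simp
    push_cast; ring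
  rw [hint, integral_exp_mul_complex hc]
  simp only [Complex.ofReal_zero, mul_zero, Complex.exp_zero]
  rw [Complex.real_smul]
  push_cast
  ring

lemma norm_exp_mul_I_sub_one_sq (θ : ℝ) :
    ‖Complex.exp (↑θ * Complex.I) - 1‖^2 = 4 * Real.sin (θ/2)^2 := by
  have h : Complex.exp (↑θ * Complex.I) - 1
      = Complex.ofReal (Real.cos θ - 1) + Complex.ofReal (Real.sin θ) * Complex.I := by
    rw [Complex.exp_mul_I]; push_cast; ring
  rw [h, Complex.sq_norm, Complex.normSq_add_mul_I]
  have h2 := Real.sin_sq_add_cos_sq θ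
  have h3 : Real.cos θ = 1 - 2 * Real.sin (θ/2)^2 := by
    have h4 := Real.cos_two_mul (θ/2)
    rw [show 2*(θ/2) = θ by ring] at h4
    nlinarith [Real.sin_sq_add_cos_sq (θ/2)]
  nlinarith

lemma normsq_coeff (α : ℝ) (n : ℤ) (h : α - n ≠ 0) :
    ‖(1/(2*π) : ℂ) * ((Complex.exp (Complex.I * ((α:ℂ) - n) * (2*π)) - 1) / (Complex.I * ((α:ℂ) - n)))‖^2
    = 4 * Real.sin (π*(α - n))^2 / (2*π*(α - n))^2 := by
  have h1 : Complex.I * ((α:ℂ) - n) * (2*(π:ℂ)) = ((2*π*(α - n) : ℝ) : ℂ) * Complex.I := by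
    push_cast; ring
  have hd : ‖Complex.I * ((α:ℂ) - n)‖^2 = (α - n)^2 := by
    rw [norm_mul, Complex.norm_I, one_mul, show ((α:ℂ) - n) = ((α - (n:ℝ) : ℝ) : ℂ) by push_cast; ring,
      Complex.norm_real, Real.norm_eq_abs, sq_abs]
  have hc : ‖(1/(2*π) : ℂ)‖^2 = (1/(2*π))^2 := by
    rw [show (1/(2*π) : ℂ) = ((1/(2*π) : ℝ) : ℂ) by push_cast; ring, Complex.norm_real, Real.norm_eq_abs, sq_abs]
  have habs : ‖(α:ℂ) - n‖ = |α - (n:ℝ)| := by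
    rw [show ((α:ℂ) - n) = ((α - (n:ℝ) : ℝ) : ℂ) by push_cast; ring, Complex.norm_real, Real.norm_eq_abs]
  have hπ := Real.pi_pos
  rw [h1]
  simp only [norm_mul, norm_div, mul_pow, div_pow, norm_exp_mul_I_sub_one_sq,
    habs, Complex.norm_I, map_mul, map_one, map_div₀, Complex.norm_real, norm_one, Real.norm_eq_abs,
    Complex.norm_two, sq_abs, abs_of_pos hπ]
  have he : ‖Complex.exp (((2*π*(α-(n:ℝ)) : ℝ):ℂ) * Complex.I) - 1‖ ^ 2
      = 4 * Real.sin ((2*π*(α-(n:ℝ)))/2)^2 := by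
    exact norm_exp_mul_I_sub_one_sq _
  rw [show (2*π*(α-(n:ℝ)))/2 = π*(α-(n:ℝ)) by ring]
  field_simp

lemma parseval_key (y : ℝ) (hy : ∀ k : ℤ, y ≠ 2 * π * k) :
    ∑' n : ℤ, 4 * Real.sin (π * (y/(2*π) - n))^2 / (2*π*(y/(2*π) - n))^2 = 1 := by
  haveI : Fact (0 < 2*π) := ⟨by positivity⟩
  set α : ℝ := y/(2*π) with hα
  set g : ℝ → ℂ := fun t : ℝ => Complex.exp (Complex.I * α * t) with hg
  set F : AddCircle (2*π) → ℂ := AddCircle.liftIoc (2*π) 0 g with hF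
  have hπ := Real.pi_pos
  have hαn : ∀ n : ℤ, α - n ≠ 0 := by
    intro n hn
    apply hy n
    have : α = n := by linarith [sub_eq_zero.mp hn]
    rw [hα] at this
    field_simp at this
    linarith [this]
  have hmeq : Measurable (⇑(equivIoc (2*π) 0)) := by
    have h := (measurableEquivIoc (T := 2*π) 0).measurable
    exact h
  have hmeas : Measurable F := by
    rw [hF]
    unfold AddCircle.liftIoc
    have hgc : Continuous g :=
      Complex.continuous_exp.comp (continuous_const.mul Complex.continuous_ofReal)
    exact ((hgc.measurable.comp measurable_subtype_coe).comp hmeq)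
  have hgnorm : ∀ t : ℝ, ‖g t‖ = 1 := by
    intro t
    rw [hg, Complex.norm_exp]
    simp [Complex.ofReal_mul]
  have hFnorm : ∀ x : AddCircle (2*π), ‖F x‖ = 1 := fun x => hgnorm _
  have hF2 : MemLp F 2 haarAddCircle := by
    refine (memLp_top_of_bound hmeas.aestronglyMeasurable 1 ?_).mono_exponent le_top
    exact Filter.Eventually.of_forall fun x => le_of_eq (hFnorm x)
  have hcoeff : ∀ n : ℤ, fourierCoeff (⇑(hF2.toLp F)) n = fourierCoeff F n := by
    intro n
    simp only [fourierCoeff]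
    apply MeasureTheory.integral_congr_ae
    filter_upwards [hF2.coeFn_toLp] with t ht
    rw [ht]
  have hpars := tsum_sq_fourierCoeff (hF2.toLp F)
  have hrhs : ∫ t : AddCircle (2*π), ‖(hF2.toLp F) t‖^2 ∂haarAddCircle = 1 := by
    rw [MeasureTheory.integral_congr_ae (g := fun _ => (1:ℝ)) ?_]
    · simp
    · filter_upwards [hF2.coeFn_toLp] with t ht
      rw [ht, hFnorm t]; norm_num
  rw [hrhs] at hpars
  rw [← hpars]
  apply tsum_congr
  intro n
  rw [hcoeff n, hF, fourierCoeff_liftIoc_eq, coeffOn_eq α n (hαn n), normsq_coeff α n (hαn n)]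

lemma neg_one_zpow_sq (m : ℤ) : ((-1:ℝ)^m)^2 = 1 := by
  rw [← zpow_natCast ((-1:ℝ)^m) 2, ← zpow_mul, mul_comm, zpow_mul]
  norm_num

/-- For every real `y` that is not an integer multiple of `2π`,
`Σ_{k∈ℤ} sin²((y+2kπ)/2)/(y+2kπ)² = 1/4`. -/
theorem tsum_sin_sq_div_sq
    (y : ℝ) (hy : ∀ k : ℤ, y ≠ 2 * π * k) :
    ∑' k : ℤ, Real.sin ((y + 2 * k * π) / 2) ^ 2 / (y + 2 * k * π) ^ 2 = 1 / 4 := by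
  have hπ := Real.pi_pos
  have key := parseval_key y hy
  have hterm : ∀ n : ℤ, 4 * Real.sin (π * (y/(2*π) - n))^2 / (2*π*(y/(2*π) - n))^2
      = 4 * Real.sin (y/2)^2 / (y + 2*(((-n : ℤ)):ℝ)*π)^2 := by
    intro n
    have h1 : π * (y/(2*π) - n) = y/2 + ((-n : ℤ) : ℝ)*π := by push_cast; field_simp; ring
    have h2 : (2*π*(y/(2*π) - n))^2 = (y + 2*(((-n : ℤ)):ℝ)*π)^2 := by
      push_cast; field_simp; ring
    rw [h1, h2, Real.sin_add_int_mul_pi, mul_pow, neg_one_zpow_sq, one_mul]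
  rw [tsum_congr hterm] at key
  have key2 : ∑' k : ℤ, 4 * Real.sin (y/2)^2 / (y + 2*(k:ℝ)*π)^2 = 1 := by
    rw [← key, ← (Equiv.neg ℤ).tsum_eq (fun k : ℤ => 4 * Real.sin (y/2)^2 / (y + 2*(k:ℝ)*π)^2)]
    exact tsum_congr fun n => by simp [Equiv.neg_apply]
  have hstep : ∀ k : ℤ, Real.sin ((y + 2*k*π)/2)^2 / (y + 2*k*π)^2
      = (1/4) * (4 * Real.sin (y/2)^2 / (y + 2*(k:ℝ)*π)^2) := by
    intro k
    have h3 : (y + 2*(k:ℝ)*π)/2 = y/2 + (k : ℝ)*π := by ring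
    rw [h3, show ((k:ℝ)) = ((k : ℤ) : ℝ) by norm_num, Real.sin_add_int_mul_pi, mul_pow,
      neg_one_zpow_sq, one_mul]
    ring
  rw [tsum_congr hstep, tsum_mul_left, key2, mul_one]
end
end

section
/- Let ε : ℕ → ℝ be a sequence that is monotone decreasing to zero (ε_{k+1} ≤ ε_k for all k, and ε_k → 0). Then there exists g ∈ L¹(ℝ) such that the function f(x) = ∫_ℝ e^{ixy} g(y) dy is real-valued and even, satisfies f(k) ≥ ε_k for every k ∈ ℕ, and ∫_0^∞ (ess sup_{|s| ≥ t} |g(s)|) dt < ∞ (so that f belongs to the algebra W₀*(ℝ)). -/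
open MeasureTheory Real Filter Set

lemma aux_integral_cexp_Ioi {c : ℂ} (hc : c.re < 0) :
    ∫ y in Ioi (0:ℝ), Complex.exp (c * y) = -c⁻¹ := by
  have hc0 : c ≠ 0 := fun h => by simp [h] at hc
  have h1 : ∀ z : ℂ, HasDerivAt (fun z : ℂ => Complex.exp (c * z)) (c * Complex.exp (c * z)) z := by
    intro z
    have := ((hasDerivAt_id z).const_mul c).cexp
    simpa [mul_comm] using this
  have hderiv : ∀ y ∈ Ici (0:ℝ), HasDerivAt (fun y : ℝ => c⁻¹ * Complex.exp (c * y))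
      (Complex.exp (c * (y:ℝ))) y := by
    intro y _
    have h2 := ((h1 (y:ℂ)).const_mul c⁻¹).comp_ofReal
    simpa [← mul_assoc, inv_mul_cancel₀ hc0] using h2
  have hre : ∀ y : ℝ, ‖Complex.exp (c * y)‖ = rexp (c.re * y) := by
    intro y
    rw [Complex.norm_exp]
    norm_num [Complex.mul_re]
  have hint : IntegrableOn (fun y : ℝ => Complex.exp (c * y)) (Ioi 0) := by
    refine Integrable.mono' (exp_neg_integrableOn_Ioi 0 (by linarith : (0:ℝ) < -c.re)) ?_ ?_
    · exact (Complex.continuous_exp.comp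
        (continuous_const.mul Complex.continuous_ofReal)).aestronglyMeasurable.restrict
    · filter_upwards with y
      rw [hre]
      simp
  have htend : Tendsto (fun y : ℝ => c⁻¹ * Complex.exp (c * y)) atTop (nhds 0) := by
    rw [tendsto_zero_iff_norm_tendsto_zero]
    have h3 : Tendsto (fun y : ℝ => rexp (c.re * y)) atTop (nhds 0) := by
      have h4 : Tendsto (fun y : ℝ => c.re * y) atTop atBot :=
        Tendsto.const_mul_atTop_of_neg (by linarith : c.re < 0) tendsto_id
      exact Real.tendsto_exp_atBot.comp h4
    have := h3.const_mul ‖c⁻¹‖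
    simpa [norm_mul, hre, mul_comm] using this
  have := integral_Ioi_of_hasDerivAt_of_tendsto' hderiv hint htend
  rw [this]
  simp

lemma aux_integrable_exp_abs {a : ℝ} (ha : 0 < a) :
    Integrable (fun y : ℝ => rexp (-a * |y|)) := by
  have h1 : IntegrableOn (fun y : ℝ => rexp (-a * |y|)) (Ioi 0) := by
    refine (exp_neg_integrableOn_Ioi 0 ha).congr_fun ?_ measurableSet_Ioi
    intro y hy
    simp [abs_of_pos (show (0:ℝ) < y from hy)]
  have h2 : IntegrableOn (fun y : ℝ => rexp (-a * |y|)) (Iio 0) := by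
    have h3 := ((integrable_indicator_iff measurableSet_Ioi).2 h1).comp_neg
    have h4 : (fun y => (Ioi (0:ℝ)).indicator (fun y => rexp (-a*|y|)) (-y))
        = (Iio (0:ℝ)).indicator (fun y => rexp (-a*|y|)) := by
      funext y
      by_cases hy : y < 0 <;> simp [indicator, hy, abs_neg, neg_pos, not_lt.2, asymm]
    rw [h4] at h3
    exact (integrable_indicator_iff measurableSet_Iio).1 h3
  have h5 : IntegrableOn (fun y : ℝ => rexp (-a * |y|)) (Ici 0) := by
    rwa [integrableOn_Ici_iff_integrableOn_Ioi]
  have := h2.union h5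
  rwa [Iio_union_Ici, integrableOn_univ] at this

lemma aux_integrable_cexp_mul {a : ℝ} (ha : 0 < a) (x : ℝ) :
    Integrable (fun y : ℝ => Complex.exp (Complex.I * x * y) * (rexp (-a * |y|) : ℂ)) := by
  refine ((aux_integrable_exp_abs ha).ofReal (𝕜 := ℂ)).bdd_mul (c := 1) ?_ (Filter.Eventually.of_forall fun y => ?_)
  · exact (Complex.continuous_exp.comp
      ((continuous_const.mul Complex.continuous_ofReal))).aestronglyMeasurable
  · rw [Complex.norm_exp]
    simp [Complex.mul_re, Complex.mul_im]

lemma aux_integral_cexp_mul {a : ℝ} (ha : 0 < a) (x : ℝ) :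
    ∫ y : ℝ, Complex.exp (Complex.I * x * y) * (rexp (-a * |y|) : ℂ)
      = ((2 * a / (a ^ 2 + x ^ 2) : ℝ) : ℂ) := by
  have hint := aux_integrable_cexp_mul ha x
  have hIoi : ∫ y in Ioi (0:ℝ), Complex.exp (Complex.I * x * y) * (rexp (-a * |y|) : ℂ)
      = -(Complex.I * x - a)⁻¹ := by
    rw [← aux_integral_cexp_Ioi (c := Complex.I * x - a) (by simp [ha])]
    refine setIntegral_congr_fun measurableSet_Ioi (fun y hy => ?_)
    rw [abs_of_pos hy, Complex.ofReal_exp, ← Complex.exp_add]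
    congr 1
    push_cast
    ring
  have hIic : ∫ y in Iic (0:ℝ), Complex.exp (Complex.I * x * y) * (rexp (-a * |y|) : ℂ)
      = -(Complex.I * (-x) - a)⁻¹ := by
    rw [show (0:ℝ) = -0 by norm_num, ← integral_comp_neg_Ioi,
      ← aux_integral_cexp_Ioi (c := Complex.I * (-x) - a) (by simp [ha])]
    refine setIntegral_congr_fun measurableSet_Ioi (fun y hy => ?_)
    rw [abs_neg, abs_of_pos hy, Complex.ofReal_exp, ← Complex.exp_add]
    congr 1
    push_cast
    ring
  have hsplit := intervalIntegral.integral_Iic_add_Ioi (b := (0:ℝ)) hint.integrableOn hint.integrableOn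
  rw [← hsplit, hIoi, hIic]
  have h1 : Complex.I * x - a ≠ 0 := by
    intro h
    have := congrArg Complex.re h
    simp [Complex.mul_re] at this
    linarith
  have h2 : Complex.I * (-x) - a ≠ 0 := by
    intro h
    have := congrArg Complex.re h
    simp [Complex.mul_re] at this
    linarith
  have hne : (0:ℝ) < a ^ 2 + x ^ 2 := by positivity
  have e1 : (Complex.I * x - a) * (Complex.I * -(x:ℂ) - a) = ((a ^ 2 + x ^ 2 : ℝ) : ℂ) := by
    push_cast
    ring_nf
    rw [Complex.I_sq]
    ring
  apply mul_right_cancel₀ (b := ((a ^ 2 + x ^ 2 : ℝ) : ℂ))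
    (by exact_mod_cast hne.ne')
  rw [show ((2 * a / (a ^ 2 + x ^ 2) : ℝ) : ℂ) * ((a ^ 2 + x ^ 2 : ℝ) : ℂ)
      = ((2 * a : ℝ) : ℂ) by rw [← Complex.ofReal_mul, div_mul_cancel₀ _ hne.ne'], ← e1]
  have expand : (-(Complex.I * -(x:ℂ) - a)⁻¹ + -(Complex.I * x - a)⁻¹)
        * ((Complex.I * x - a) * (Complex.I * -(x:ℂ) - a))
      = -(((Complex.I * x - a)⁻¹ * (Complex.I * x - a)) * (Complex.I * -(x:ℂ) - a))
        - ((Complex.I * -(x:ℂ) - a)⁻¹ * (Complex.I * -(x:ℂ) - a)) * (Complex.I * x - a) := by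
    ring
  rw [expand, inv_mul_cancel₀ h1, inv_mul_cancel₀ h2]
  push_cast
  ring

set_option maxHeartbeats 1000000 in
/-- Theorem P2, part 2: For every sequence `ε_k` monotone decreasing to
zero there is `g ∈ L¹(ℝ)` whose Fourier transform `f` is real-valued, even, satisfies
`f(k) ≥ ε_k` for all `k ∈ ℕ`, and `∫_0^∞ ess sup_{|s|≥t} |g(s)| dt < ∞`
(so `f ∈ W₀*(ℝ)`). -/
theorem exists_W0star_dominating_sequence
    (ε : ℕ → ℝ) (hmono : ∀ k : ℕ, ε (k + 1) ≤ ε k)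
    (hlim : Tendsto ε atTop (nhds 0)) :
    ∃ g : ℝ → ℂ, Integrable g ∧
      (∀ x : ℝ, (∫ y : ℝ, Complex.exp (Complex.I * x * y) * g y).im = 0) ∧
      (∀ x : ℝ, (∫ y : ℝ, Complex.exp (Complex.I * (-x) * y) * g y)
        = ∫ y : ℝ, Complex.exp (Complex.I * x * y) * g y) ∧
      (∀ k : ℕ, ε k ≤ (∫ y : ℝ, Complex.exp (Complex.I * k * y) * g y).re) ∧
      (∫⁻ t in Set.Ioi (0 : ℝ),
        essSup (fun s : ℝ => (‖g s‖₊ : ENNReal)) (volume.restrict {s : ℝ | t ≤ |s|})) < ⊤ := by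
  classical
  set d : ℕ → ℝ := fun n => ε n - ε (n + 1) with hd_def
  have hd0 : ∀ n, 0 ≤ d n := fun n => sub_nonneg.2 (hmono n)
  have htail : ∀ k : ℕ, HasSum (fun n => d (n + k)) (ε k) := by
    intro k
    rw [hasSum_iff_tendsto_nat_of_nonneg (fun n => hd0 _)]
    have hsum : ∀ N : ℕ, ∑ i ∈ Finset.range N, d (i + k) = ε k - ε (N + k) := by
      intro N
      induction N with
      | zero => simp
      | succ n ih =>
        rw [Finset.sum_range_succ, ih, show n + 1 + k = n + k + 1 by omega]
        simp only [hd_def]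
        ring
    have h2 : Tendsto (fun N : ℕ => ε k - ε (N + k)) atTop (nhds (ε k - 0)) :=
      tendsto_const_nhds.sub (hlim.comp (tendsto_add_atTop_nat k))
    rw [sub_zero] at h2
    exact h2.congr fun N => (hsum N).symm
  have hd_sum : Summable d := by simpa using (htail 0).summable
  -- the pieces
  set c : ℕ → ℝ := fun n => d n * ((n : ℝ) + 1) with hc_def
  have hc0 : ∀ n, 0 ≤ c n := fun n => mul_nonneg (hd0 n) (by positivity)
  set h : ℕ → ℝ → ℝ := fun n y => c n * rexp (-((n : ℝ) + 1) * |y|) with hh_def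
  have hh0 : ∀ n y, 0 ≤ h n y := fun n y => mul_nonneg (hc0 n) (exp_pos _).le
  have hhle : ∀ n (y : ℝ), y ≠ 0 → h n y ≤ d n * |y|⁻¹ := by
    intro n y hy
    have hay : 0 < |y| := abs_pos.2 hy
    have hu : 0 < ((n : ℝ) + 1) * |y| := by positivity
    have hx : ((n : ℝ) + 1) * |y| ≤ rexp (((n : ℝ) + 1) * |y|) := by
      have := Real.add_one_le_exp (((n : ℝ) + 1) * |y|)
      linarith
    have h2 : (rexp (((n : ℝ) + 1) * |y|))⁻¹ ≤ (((n : ℝ) + 1) * |y|)⁻¹ :=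
      inv_anti₀ hu hx
    calc h n y = c n * (rexp (((n : ℝ) + 1) * |y|))⁻¹ := by
          rw [hh_def]; simp only [neg_mul]; rw [Real.exp_neg]
      _ ≤ c n * (((n : ℝ) + 1) * |y|)⁻¹ := mul_le_mul_of_nonneg_left h2 (hc0 n)
      _ = d n * |y|⁻¹ := by
          rw [hc_def, mul_inv]
          field_simp
  have hsummable : ∀ y : ℝ, y ≠ 0 → Summable (fun n => h n y) := fun y hy =>
    Summable.of_nonneg_of_le (fun n => hh0 n y) (fun n => hhle n y hy) (hd_sum.mul_right _)
  set G : ℝ → ℝ := fun y => ∑' n, h n y with hG_def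
  have hG0 : ∀ y, 0 ≤ G y := fun y => tsum_nonneg fun n => hh0 n y
  -- per-term integrability and integrals
  have hnp : ∀ n : ℕ, (0:ℝ) < (n : ℝ) + 1 := fun n => by positivity
  have hterm_cont : ∀ n, Continuous (h n) := fun n =>
    continuous_const.mul ((continuous_const.mul continuous_abs).rexp)
  have hterm_int : ∀ n, Integrable (h n) := fun n =>
    ((aux_integrable_exp_abs (hnp n)).const_mul (c n)).congr (by
      filter_upwards with y; rw [hh_def])
  have he : ∀ n (x y : ℝ), Complex.exp (Complex.I * x * y) * ((h n y : ℝ) : ℂ)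
      = (c n : ℂ) * (Complex.exp (Complex.I * x * y) * ((rexp (-((n:ℝ)+1) * |y|) : ℝ) : ℂ)) := by
    intro n x y
    rw [hh_def]
    push_cast
    ring
  have hterm_cint : ∀ n (x : ℝ),
      Integrable (fun y : ℝ => Complex.exp (Complex.I * x * y) * ((h n y : ℝ) : ℂ)) := by
    intro n x
    have := (aux_integrable_cexp_mul (hnp n) x).const_mul ((c n : ℝ) : ℂ)
    exact this.congr (by filter_upwards with y; exact (he n x y).symm)
  have hterm_cval : ∀ n (x : ℝ), ∫ y : ℝ, Complex.exp (Complex.I * x * y) * ((h n y : ℝ) : ℂ)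
      = (((c n * (2 * ((n:ℝ)+1) / (((n:ℝ)+1) ^ 2 + x ^ 2))) : ℝ) : ℂ) := by
    intro n x
    simp only [he]
    rw [MeasureTheory.integral_const_mul, aux_integral_cexp_mul (hnp n) x]
    push_cast
    ring
  have hterm_rval : ∀ n, ∫ y : ℝ, h n y = 2 * d n := by
    intro n
    have h1 := hterm_cval n 0
    simp only [Complex.ofReal_zero, mul_zero, zero_mul, Complex.exp_zero, one_mul] at h1
    have h2 : ∫ y : ℝ, h n y = c n * (2 * ((n:ℝ)+1) / (((n:ℝ)+1) ^ 2 + (0:ℝ) ^ 2)) := by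
      have h4 : ∫ y : ℝ, ((h n y : ℝ) : ℂ) = ((∫ y : ℝ, h n y : ℝ) : ℂ) := integral_ofReal
      rw [h4] at h1
      exact_mod_cast h1
    rw [h2, hc_def]
    have := (hnp n).ne'
    field_simp
    ring
  have hterm_lint : ∀ n, ∫⁻ y, ENNReal.ofReal (h n y) = ENNReal.ofReal (2 * d n) := by
    intro n
    rw [← ofReal_integral_eq_lintegral_ofReal (hterm_int n)
      (Filter.Eventually.of_forall (hh0 n)), hterm_rval n]
  have hlint_sum : ∑' n, ∫⁻ y, ENNReal.ofReal (h n y) ≠ ⊤ := by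
    have : ∑' n, ∫⁻ y, ENNReal.ofReal (h n y) = ENNReal.ofReal (∑' n, 2 * d n) := by
      rw [ENNReal.ofReal_tsum_of_nonneg (fun n => by
        have := hd0 n; positivity) (hd_sum.mul_left 2)]
      exact tsum_congr fun n => hterm_lint n
    rw [this]
    exact ENNReal.ofReal_ne_top
  -- measurability
  have h0ae : ∀ᵐ y : ℝ ∂volume, y ≠ 0 := by
    have : volume ({(0:ℝ)} : Set ℝ) = 0 := measure_singleton 0
    rw [ae_iff]
    convert this using 2
    ext y
    simp
  have hofc : ∀ y : ℝ, y ≠ 0 → ENNReal.ofReal (G y) = ∑' n, ENNReal.ofReal (h n y) := by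
    intro y hy
    exact ENNReal.ofReal_tsum_of_nonneg (fun n => hh0 n y) (hsummable y hy)
  have hmeas : AEStronglyMeasurable (fun y => ((G y : ℝ) : ℂ)) volume := by
    have hm : Measurable fun y : ℝ => (∑' n, ENNReal.ofReal (h n y)).toReal :=
      (Measurable.ennreal_tsum fun n =>
        ENNReal.measurable_ofReal.comp (hterm_cont n).measurable).ennreal_toReal
    refine ((Complex.measurable_ofReal.comp hm).aestronglyMeasurable).congr ?_
    filter_upwards [h0ae] with y hy
    rw [Function.comp_apply, ← hofc y hy, ENNReal.toReal_ofReal (hG0 y)]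
  have hgnorm : ∀ y : ℝ, (‖((G y : ℝ) : ℂ)‖₊ : ENNReal) = ENNReal.ofReal (G y) := by
    intro y
    rw [Complex.nnnorm_real]
    exact Real.enorm_eq_ofReal (hG0 y)
  have hfin : HasFiniteIntegral (fun y => ((G y : ℝ) : ℂ)) volume := by
    have hswap : ∫⁻ y : ℝ, ∑' n, ENNReal.ofReal (h n y)
        = ∑' n, ∫⁻ y : ℝ, ENNReal.ofReal (h n y) :=
      lintegral_tsum fun n => ((hterm_cont n).measurable.ennreal_ofReal).aemeasurable
    have hb : ∫⁻ y, (‖((G y : ℝ) : ℂ)‖₊ : ENNReal)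
        ≤ ∫⁻ y : ℝ, ∑' n, ENNReal.ofReal (h n y) := by
      apply lintegral_mono_ae
      filter_upwards [h0ae] with y hy
      rw [hgnorm y, hofc y hy]
    exact lt_of_le_of_lt (hb.trans (le_of_eq hswap)) (lt_top_iff_ne_top.2 hlint_sum)
  have hg_int : Integrable (fun y => ((G y : ℝ) : ℂ)) := ⟨hmeas, hfin⟩
  -- the Fourier transform
  have hF : ∀ x : ℝ, (∫ y : ℝ, Complex.exp (Complex.I * x * y) * ((G y : ℝ) : ℂ))
      = ((∑' n, c n * (2 * ((n:ℝ)+1) / (((n:ℝ)+1) ^ 2 + x ^ 2)) : ℝ) : ℂ) := by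
    intro x
    have e2 : ∀ y : ℝ, Complex.exp (Complex.I * x * y) * ((G y : ℝ) : ℂ)
        = ∑' n, Complex.exp (Complex.I * x * y) * ((h n y : ℝ) : ℂ) := by
      intro y
      rw [tsum_mul_left, hG_def, Complex.ofReal_tsum]
    simp only [e2]
    have hswap2 := integral_tsum (μ := (volume : Measure ℝ))
      (f := fun n (y : ℝ) => Complex.exp (Complex.I * x * y) * ((h n y : ℝ) : ℂ))
      (fun n => ((Complex.continuous_exp.comp
        (continuous_const.mul Complex.continuous_ofReal)).mul
        (Complex.continuous_ofReal.comp (hterm_cont n))).aestronglyMeasurable) ?_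
    · rw [hswap2]
      simp only [hterm_cval]
      rw [Complex.ofReal_tsum]
    · have hnn : ∀ n (y : ℝ), (‖Complex.exp (Complex.I * x * y) * ((h n y : ℝ) : ℂ)‖₊ : ENNReal)
          = ENNReal.ofReal (h n y) := by
        intro n y
        rw [nnnorm_mul]
        have h1 : ‖Complex.exp (Complex.I * x * y)‖₊ = 1 := by
          ext
          rw [coe_nnnorm, Complex.norm_exp]
          simp [Complex.mul_re, Complex.mul_im]
        rw [h1, one_mul, Complex.nnnorm_real]
        exact Real.enorm_eq_ofReal (hh0 n y)
      simp only [enorm_eq_nnnorm, hnn]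
      exact hlint_sum
  -- conclusions
  refine ⟨fun y => ((G y : ℝ) : ℂ), hg_int, ?_, ?_, ?_, ?_⟩
  · intro x
    rw [hF x]
    exact Complex.ofReal_im _
  · intro x
    have h1 := hF (-x)
    have h2 := hF x
    simp only [Complex.ofReal_neg] at h1
    rw [h1, h2]
    congr 1
    exact tsum_congr fun n => by rw [neg_sq]
  · intro k
    have h1 := hF (k : ℝ)
    simp only [Complex.ofReal_natCast] at h1
    rw [h1, Complex.ofReal_re]
    set w : ℕ → ℝ := fun n => 2 * ((n:ℝ) + 1) / (((n:ℝ) + 1) ^ 2 + (k:ℝ) ^ 2) with hw_def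
    have hw0 : ∀ n, 0 ≤ c n * w n := fun n =>
      mul_nonneg (hc0 n) (by rw [hw_def]; positivity)
    have hupper : ∀ n, c n * w n ≤ 2 * d n := by
      intro n
      have hD : (0:ℝ) < ((n:ℝ) + 1) ^ 2 + (k:ℝ) ^ 2 := by positivity
      have hkey : ((n:ℝ) + 1) * w n ≤ 2 := by
        rw [hw_def, mul_div_assoc']
        rw [div_le_iff₀ hD]
        nlinarith [sq_nonneg (k:ℝ)]
      calc c n * w n = d n * (((n:ℝ) + 1) * w n) := by rw [hc_def]; ring
        _ ≤ d n * 2 := mul_le_mul_of_nonneg_left hkey (hd0 n)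
        _ = 2 * d n := by ring
    have hsum_cw : Summable (fun n => c n * w n) :=
      Summable.of_nonneg_of_le hw0 hupper (hd_sum.mul_left 2)
    have hlower : ∀ n, k ≤ n → d n ≤ c n * w n := by
      intro n hkn
      have hk1 : (k:ℝ) ≤ (n:ℝ) := by exact_mod_cast hkn
      have hD : (0:ℝ) < ((n:ℝ) + 1) ^ 2 + (k:ℝ) ^ 2 := by positivity
      have h1 : 1 ≤ ((n:ℝ) + 1) * w n := by
        rw [hw_def, mul_div_assoc', le_div_iff₀ hD]
        nlinarith
      calc d n = d n * 1 := (mul_one _).symm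
        _ ≤ d n * (((n:ℝ) + 1) * w n) := mul_le_mul_of_nonneg_left h1 (hd0 n)
        _ = c n * w n := by rw [hc_def]; ring
    have hshift : Summable (fun n => c (n + k) * w (n + k)) :=
      (summable_nat_add_iff k).2 hsum_cw
    calc ε k = ∑' n, d (n + k) := (htail k).tsum_eq.symm
      _ ≤ ∑' n, c (n + k) * w (n + k) :=
        Summable.tsum_le_tsum (fun n => hlower (n + k) (Nat.le_add_left k n)) (htail k).summable hshift
      _ ≤ ∑' n, c n * w n :=
        hshift.tsum_le_tsum_of_inj (fun n => n + k) (add_left_injective k)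
          (fun m _ => hw0 m) (fun n => le_rfl) hsum_cw
  · have hGmono : ∀ t u : ℝ, 0 < t → t ≤ u → G u ≤ G t := by
      intro t u ht htu
      have hu : (0:ℝ) < u := lt_of_lt_of_le ht htu
      refine Summable.tsum_le_tsum (fun n => ?_) (hsummable u hu.ne') (hsummable t ht.ne')
      apply mul_le_mul_of_nonneg_left _ (hc0 n)
      apply Real.exp_le_exp.2
      rw [abs_of_pos ht, abs_of_pos hu]
      nlinarith [hnp n]
    have hGeven : ∀ s : ℝ, G s = G |s| := fun s =>
      tsum_congr fun n => by simp only [hh_def, abs_abs]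
    have hset : ∀ t : ℝ, MeasurableSet {s : ℝ | t ≤ |s|} :=
      fun t => measurableSet_le measurable_const measurable_abs
    have hess : ∀ t : ℝ, 0 < t →
        essSup (fun s : ℝ => (‖((G s : ℝ) : ℂ)‖₊ : ENNReal))
          (volume.restrict {s : ℝ | t ≤ |s|}) ≤ (‖((G t : ℝ) : ℂ)‖₊ : ENNReal) := by
      intro t ht
      refine essSup_le_of_ae_le _ ?_
      refine (ae_restrict_iff' (hset t)).2 (Filter.Eventually.of_forall fun s hs => ?_)
      simp only [hgnorm]
      exact ENNReal.ofReal_le_ofReal (by rw [hGeven s]; exact hGmono t |s| ht hs)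
    have hb : ∫⁻ t in Set.Ioi (0:ℝ),
        essSup (fun s : ℝ => (‖((G s : ℝ) : ℂ)‖₊ : ENNReal))
          (volume.restrict {s : ℝ | t ≤ |s|})
        ≤ ∫⁻ t in Set.Ioi (0:ℝ), (‖((G t : ℝ) : ℂ)‖₊ : ENNReal) := by
      apply lintegral_mono_ae
      rw [ae_restrict_iff' measurableSet_Ioi]
      filter_upwards with t ht
      exact hess t ht
    exact lt_of_le_of_lt (hb.trans (setLIntegral_le_lintegral _ _)) hfin
end

section
/- Let μ be a finite (positive) Borel measure on ℝ and let f(x) = ∫_ℝ e^{-ixt} dμ(t). Then for every x ∈ ℝ, the improper integral ∫_{δ}^{M} (f(x+u) − f(x−u)) / u du converges as δ → 0⁺ and M → ∞ to −πi ∫_ℝ e^{-ixt} sign(t) dμ(t), and moreover there is an absolute constant C such that sup over all x ∈ ℝ and all 0 < δ < M of |∫_{δ}^{M} (f(x+u) − f(x−u))/u du| ≤ C · μ(ℝ). -/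
open MeasureTheory Real Filter Set intervalIntegral


noncomputable def Gd : ℝ → ℝ := fun y => ∫ u in (0:ℝ)..y, Real.sin u / u

lemma sinc_meas : Measurable fun u : ℝ => Real.sin u / u :=
  Real.measurable_sin.div measurable_id

lemma sinc_abs_le (u : ℝ) : |Real.sin u / u| ≤ 1 := by
  rcases eq_or_ne u 0 with h | h
  · simp [h]
  · rw [abs_div]
    exact div_le_one_of_le₀ (Real.abs_sin_le_abs (x := u)) (abs_nonneg u)

lemma sinc_intInt (a b : ℝ) : IntervalIntegrable (fun u => Real.sin u / u) volume a b := by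
  refine (_root_.intervalIntegrable_const (c := (1:ℝ))).mono_fun
    sinc_meas.aestronglyMeasurable (ae_of_all _ fun u => ?_)
  simp only [Real.norm_eq_abs]; simpa using sinc_abs_le u

lemma Gd_cont : Continuous Gd :=
  intervalIntegral.continuous_primitive (fun a b => sinc_intInt a b) 0

lemma Gd_zero : Gd 0 = 0 := by simp [Gd]

lemma Gd_odd (y : ℝ) : Gd (-y) = -Gd y := by
  have h := intervalIntegral.integral_comp_neg (a := (0:ℝ)) (b := y)
    (fun u => Real.sin u / u)
  simp only [neg_zero] at h
  have h1 : Gd y = ∫ x in (-y)..(0:ℝ), Real.sin x / x := by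
    rw [← h]
    exact intervalIntegral.integral_congr fun u _ => by
      simp only [Real.sin_neg, neg_div_neg_eq]
  have h2 : (∫ x in (-y)..(0:ℝ), Real.sin x / x) = -Gd (-y) := by
    rw [intervalIntegral.integral_symm]; rfl
  rw [h2] at h1; linarith

-- closed-form for ∫_0^M exp(-xy) sin x dx
lemma expsin_antideriv (y M : ℝ) :
    (∫ x in (0:ℝ)..M, Real.exp (-x*y) * Real.sin x)
      = (1 - Real.exp (-M*y) * (y * Real.sin M + Real.cos M)) / (1+y^2) := by
  have hy : (1:ℝ) + y^2 ≠ 0 := by positivity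
  have key : ∀ x : ℝ, HasDerivAt
      (fun x => -(Real.exp (-x*y) * (y * Real.sin x + Real.cos x)) / (1+y^2))
      (Real.exp (-x*y) * Real.sin x) x := by
    intro x
    have h1 : HasDerivAt (fun x : ℝ => -x*y) (-y) x := by
      simpa using ((hasDerivAt_id x).neg.mul_const y)
    have h2 : HasDerivAt (fun x : ℝ => Real.exp (-x*y)) (Real.exp (-x*y) * -y) x := h1.exp
    have h3 : HasDerivAt (fun x : ℝ => y * Real.sin x + Real.cos x)
        (y * Real.cos x + -Real.sin x) x :=
      ((Real.hasDerivAt_sin x).const_mul y).add (Real.hasDerivAt_cos x)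
    have h4 := ((h2.mul h3).neg).div_const (1+y^2)
    refine h4.congr_deriv ?_
    rw [div_eq_iff hy]
    ring
  have hInt : IntervalIntegrable (fun x => Real.exp (-x*y) * Real.sin x) volume 0 M :=
    (Continuous.intervalIntegrable (by continuity) 0 M)
  have := intervalIntegral.integral_eq_sub_of_hasDerivAt (fun x _ => key x) hInt
  rw [this]
  simp [Real.cos_zero, Real.sin_zero]
  ring

lemma exp_int {x : ℝ} (hx : 0 < x) : (∫ y in Ioi (0:ℝ), Real.exp (-(x*y))) = x⁻¹ := by
  have := integral_comp_mul_left_Ioi (g := fun y => Real.exp (-y)) (a := 0) hx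
  simp only [mul_zero] at this
  simp only [← neg_mul] at this
  rw [show (fun y => Real.exp (-(x*y))) = (fun y => Real.exp (-(x*y))) from rfl]
  calc (∫ y in Ioi (0:ℝ), Real.exp (-(x*y)))
      = x⁻¹ • ∫ y in Ioi (0:ℝ), Real.exp (-y) := by
        rw [← this]; exact setIntegral_congr_fun measurableSet_Ioi (fun y _ => by ring_nf)
    _ = x⁻¹ := by rw [integral_exp_neg_Ioi_zero]; simp


lemma dirichlet_fubini {M : ℝ} (hM : 0 < M) :
    Gd M = ∫ y in Ioi (0:ℝ),
      (1 - Real.exp (-M*y) * (y * Real.sin M + Real.cos M)) / (1+y^2) := by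
  have hmeas : AEStronglyMeasurable (Function.uncurry fun x y : ℝ => Real.exp (-(x*y)) * Real.sin x)
      ((volume.restrict (Ioc (0:ℝ) M)).prod (volume.restrict (Ioi (0:ℝ)))) :=
    (((measurable_fst.mul measurable_snd).neg.exp).mul
      (Real.measurable_sin.comp measurable_fst)).aestronglyMeasurable
  have hint : Integrable (Function.uncurry fun x y : ℝ => Real.exp (-(x*y)) * Real.sin x)
      ((volume.restrict (Ioc (0:ℝ) M)).prod (volume.restrict (Ioi (0:ℝ)))) := by
    rw [integrable_prod_iff hmeas]
    constructor
    · filter_upwards [ae_restrict_mem measurableSet_Ioc] with x hx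
      have : IntegrableOn (fun y => Real.exp (-x*y)) (Ioi (0:ℝ)) :=
        exp_neg_integrableOn_Ioi 0 hx.1
      simpa only [neg_mul, Function.uncurry_apply_pair] using this.mul_const (Real.sin x)
    · refine Integrable.mono' (integrable_const (1:ℝ))
        ((hmeas.norm).integral_prod_right') ?_
      filter_upwards [ae_restrict_mem measurableSet_Ioc] with x hx
      have hval : (∫ y in Ioi (0:ℝ), ‖Real.exp (-(x*y)) * Real.sin x‖)
          = |Real.sin x| * x⁻¹ := by
        simp only [Function.uncurry, norm_mul, Real.norm_eq_abs, Real.abs_exp]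
        rw [MeasureTheory.integral_mul_const, exp_int hx.1]; ring
      simp only [Function.uncurry]
      rw [Real.norm_eq_abs, hval, abs_of_nonneg (mul_nonneg (abs_nonneg _) (inv_nonneg.2 hx.1.le))]
      rw [mul_inv_le_iff₀ hx.1, one_mul]
      calc |Real.sin x| ≤ |x| := Real.abs_sin_le_abs
        _ = x := abs_of_pos hx.1
  have swap := MeasureTheory.integral_integral_swap hint
  have lhs_eq : Gd M = ∫ x in Ioc (0:ℝ) M, ∫ y in Ioi (0:ℝ),
      Real.exp (-(x*y)) * Real.sin x := by
    unfold Gd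
    rw [intervalIntegral.integral_of_le hM.le]
    refine setIntegral_congr_fun measurableSet_Ioc (fun x hx => ?_)
    rw [MeasureTheory.integral_mul_const, exp_int hx.1]
    rw [div_eq_mul_inv, mul_comm]
  rw [lhs_eq, swap]
  refine setIntegral_congr_fun measurableSet_Ioi (fun y _ => ?_)
  rw [← intervalIntegral.integral_of_le hM.le, ← expsin_antideriv y M]
  refine intervalIntegral.integral_congr (fun x _ => ?_)
  rw [neg_mul]


lemma rem_bound (M : ℝ) (y : ℝ) (hy : 0 < y) :
    |Real.exp (-M*y) * (y * Real.sin M + Real.cos M) / (1+y^2)| ≤ 2 * Real.exp (-M*y) := by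
  rw [abs_div, abs_of_nonneg (by positivity : (0:ℝ) ≤ 1 + y^2), abs_mul, Real.abs_exp]
  rw [div_le_iff₀ (by positivity)]
  have h1 : |y * Real.sin M + Real.cos M| ≤ y + 1 := by
    calc |y * Real.sin M + Real.cos M| ≤ |y * Real.sin M| + |Real.cos M| := abs_add_le _ _
      _ ≤ y * 1 + 1 := by
          gcongr
          · rw [abs_mul, abs_of_pos hy]
            exact mul_le_mul_of_nonneg_left (Real.abs_sin_le_one M) hy.le
          · exact Real.abs_cos_le_one M
      _ = y + 1 := by ring
  have h2 : y + 1 ≤ 2 * (1 + y^2) := by nlinarith [sq_nonneg (y - 1), sq_nonneg y]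
  calc Real.exp (-M*y) * |y * Real.sin M + Real.cos M|
      ≤ Real.exp (-M*y) * (y+1) := by gcongr
    _ ≤ Real.exp (-M*y) * (2 * (1+y^2)) := by gcongr
    _ = 2 * Real.exp (-M*y) * (1+y^2) := by ring

lemma rem_integrable {M : ℝ} (hM : 0 < M) :
    IntegrableOn (fun y => Real.exp (-M*y) * (y * Real.sin M + Real.cos M) / (1+y^2))
      (Ioi (0:ℝ)) := by
  refine Integrable.mono' ((exp_neg_integrableOn_Ioi 0 hM).const_mul 2) ?_ ?_
  · have hm : Measurable (fun y : ℝ => Real.exp (-M*y) * (y * Real.sin M + Real.cos M) / (1+y^2)) := by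
      fun_prop
    exact hm.aestronglyMeasurable
  · filter_upwards [ae_restrict_mem measurableSet_Ioi] with y hy
    simp only [Real.norm_eq_abs]
    exact rem_bound M y hy

lemma Gd_sub_bound {M : ℝ} (hM : 0 < M) : |Gd M - π/2| ≤ 2 / M := by
  have hGd := dirichlet_fubini hM
  have hint1 : IntegrableOn (fun y : ℝ => (1+y^2)⁻¹) (Ioi (0:ℝ)) :=
    integrable_inv_one_add_sq.integrableOn
  have hint2 := rem_integrable hM
  have split : Gd M = (∫ y in Ioi (0:ℝ), (1+y^2)⁻¹)
      - ∫ y in Ioi (0:ℝ), Real.exp (-M*y) * (y * Real.sin M + Real.cos M) / (1+y^2) := by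
    rw [hGd, ← MeasureTheory.integral_sub hint1 hint2]
    refine setIntegral_congr_fun measurableSet_Ioi (fun y _ => ?_)
    have : (1:ℝ) + y^2 ≠ 0 := by positivity
    field_simp
  rw [split, integral_Ioi_inv_one_add_sq, Real.arctan_zero, sub_zero]
  have habs : |π/2 - (∫ y in Ioi (0:ℝ), Real.exp (-M*y) * (y * Real.sin M + Real.cos M) / (1+y^2)) - π/2|
      = |∫ y in Ioi (0:ℝ), Real.exp (-M*y) * (y * Real.sin M + Real.cos M) / (1+y^2)| := by
    rw [show π/2 - (∫ y in Ioi (0:ℝ), Real.exp (-M*y) * (y * Real.sin M + Real.cos M) / (1+y^2)) - π/2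
      = -(∫ y in Ioi (0:ℝ), Real.exp (-M*y) * (y * Real.sin M + Real.cos M) / (1+y^2)) by ring, abs_neg]
  rw [habs]
  have hexpint : IntegrableOn (fun y => 2 * Real.exp (-M*y)) (Ioi (0:ℝ)) :=
    (exp_neg_integrableOn_Ioi 0 hM).const_mul 2
  calc |∫ y in Ioi (0:ℝ), Real.exp (-M*y) * (y * Real.sin M + Real.cos M) / (1+y^2)|
      ≤ ∫ y in Ioi (0:ℝ), |Real.exp (-M*y) * (y * Real.sin M + Real.cos M) / (1+y^2)| :=
        MeasureTheory.abs_integral_le_integral_abs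
    _ ≤ ∫ y in Ioi (0:ℝ), 2 * Real.exp (-M*y) := by
        refine setIntegral_mono_on (rem_integrable hM).abs hexpint measurableSet_Ioi
          (fun y hy => rem_bound M y hy)
    _ = 2 / M := by
        rw [MeasureTheory.integral_const_mul]
        have : (∫ y in Ioi (0:ℝ), Real.exp (-M*y)) = M⁻¹ := by
          rw [← exp_int hM]
          exact setIntegral_congr_fun measurableSet_Ioi (fun y _ => by rw [neg_mul])
        rw [this]; ring

lemma Gd_tendsto : Tendsto Gd atTop (nhds (π/2)) := by
  have h0 : Tendsto (fun M : ℝ => 2 / M) atTop (nhds 0) :=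
    tendsto_const_nhds.div_atTop tendsto_id
  have h1 : Tendsto (fun M => Gd M - π/2) atTop (nhds 0) := by
    refine squeeze_zero_norm' ?_ h0
    filter_upwards [eventually_gt_atTop (0:ℝ)] with M hM
    simpa [Real.norm_eq_abs] using Gd_sub_bound hM
  have := h1.add_const (π/2)
  simpa using this

lemma Gd_bound : ∃ B : ℝ, 0 < B ∧ ∀ y : ℝ, |Gd y| ≤ B := by
  obtain ⟨N, hN⟩ := (Metric.tendsto_atTop.mp Gd_tendsto) 1 one_pos
  set N' := max N 0 with hN'
  obtain ⟨C, hC⟩ := (isCompact_Icc (a := -N') (b := N')).exists_bound_of_continuousOn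
    Gd_cont.continuousOn
  refine ⟨max C (|π/2| + 1) + 1, by positivity, fun y => ?_⟩
  have hodd : |Gd y| = |Gd (|y|)| := by
    rcases le_or_gt 0 y with h | h
    · rw [abs_of_nonneg h]
    · rw [abs_of_neg h, Gd_odd, abs_neg]
  rcases le_or_gt |y| N' with h | h
  · have := hC y ⟨neg_le_of_abs_le h, le_of_abs_le h⟩
    rw [Real.norm_eq_abs] at this
    have h2 : C ≤ max C (|π/2| + 1) + 1 := le_trans (le_max_left _ _) (by linarith)
    linarith
  · have hge : N ≤ |y| := le_trans (le_max_left N 0) h.le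
    have := hN (|y|) hge
    rw [Real.dist_eq] at this
    rw [hodd]
    have h3 : |Gd (|y|)| ≤ |π/2| + 1 := by
      calc |Gd (|y|)| = |(Gd (|y|) - π/2) + π/2| := by ring_nf
        _ ≤ |Gd (|y|) - π/2| + |π/2| := abs_add_le _ _
        _ ≤ |π/2| + 1 := by linarith
    have h4 : |π/2| + 1 ≤ max C (|π/2| + 1) + 1 := le_trans (le_max_right _ _) (by linarith)
    linarith


lemma S_eq (t δ M : ℝ) :
    (∫ u in δ..M, Real.sin (u*t) / u) = Gd (t*M) - Gd (t*δ) := by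
  rcases eq_or_ne t 0 with rfl | ht
  · simp [Gd_zero]
  · have hfun : ∀ u : ℝ, Real.sin (u*t) / u = t * ((fun v => Real.sin v / v) (u*t)) := by
      intro u
      rcases eq_or_ne u 0 with rfl | hu
      · simp
      · field_simp
    rw [intervalIntegral.integral_congr (fun u _ => hfun u)]
    rw [intervalIntegral.integral_const_mul]
    rw [intervalIntegral.integral_comp_mul_right (fun v => Real.sin v / v) ht]
    have hsub : (∫ v in (δ*t)..(M*t), Real.sin v / v)
        = Gd (t*M) - Gd (t*δ) := by
      unfold Gd
      rw [mul_comm t M, mul_comm t δ]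
      exact (intervalIntegral.integral_interval_sub_left (sinc_intInt 0 (M*t)) (sinc_intInt 0 (δ*t))).symm
    rw [hsub, smul_eq_mul, ← mul_assoc, mul_inv_cancel₀ ht, one_mul]

lemma S_tendsto (t : ℝ) :
    Tendsto (fun p : ℝ × ℝ => Gd (t*p.2) - Gd (t*p.1))
      ((nhdsWithin 0 (Set.Ioi 0)) ×ˢ atTop) (nhds (π/2 * Real.sign t)) := by
  have hδ : Tendsto (fun p : ℝ × ℝ => Gd (t*p.1))
      ((nhdsWithin 0 (Set.Ioi 0)) ×ˢ atTop) (nhds 0) := by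
    have h1 : Tendsto (fun p : ℝ × ℝ => p.1) ((nhdsWithin 0 (Set.Ioi 0)) ×ˢ atTop) (nhds 0) :=
      tendsto_fst.mono_right nhdsWithin_le_nhds
    have h2 : Tendsto (fun p : ℝ × ℝ => t * p.1) ((nhdsWithin 0 (Set.Ioi 0)) ×ˢ atTop)
        (nhds 0) := by simpa using h1.const_mul t
    simpa [Gd_zero, Function.comp_def] using (Gd_cont.tendsto 0).comp h2
  rcases lt_trichotomy t 0 with ht | rfl | ht
  · have hM : Tendsto (fun p : ℝ × ℝ => Gd (t*p.2))
        ((nhdsWithin 0 (Set.Ioi 0)) ×ˢ atTop) (nhds (-(π/2))) := by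
      have h1 : Tendsto (fun p : ℝ × ℝ => -t * p.2) ((nhdsWithin 0 (Set.Ioi 0)) ×ˢ atTop)
          atTop := (tendsto_snd).const_mul_atTop (by linarith)
      have h2 := (Gd_tendsto.comp h1).neg
      refine h2.congr (fun p => ?_)
      simp only [Function.comp_apply]
      rw [← Gd_odd]
      ring_nf
    have := hM.sub hδ
    rw [Real.sign_of_neg ht]
    simpa using this
  · simpa [Gd_zero] using (tendsto_const_nhds (α := ℝ)
      (f := (nhdsWithin (0:ℝ) (Set.Ioi 0)) ×ˢ atTop) (a := 0))
  · have hM : Tendsto (fun p : ℝ × ℝ => Gd (t*p.2))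
        ((nhdsWithin 0 (Set.Ioi 0)) ×ˢ atTop) (nhds (π/2)) := by
      have h1 : Tendsto (fun p : ℝ × ℝ => t * p.2) ((nhdsWithin 0 (Set.Ioi 0)) ×ˢ atTop)
          atTop := (tendsto_snd).const_mul_atTop ht
      exact Gd_tendsto.comp h1
    have := hM.sub hδ
    rw [Real.sign_of_pos ht]
    simpa using this


lemma exp_diff (z : ℂ) :
    Complex.exp (-z*Complex.I) - Complex.exp (z*Complex.I) = -2*Complex.I*Complex.sin z := by
  rw [Complex.sin]
  linear_combination (Complex.exp (-z*Complex.I) - Complex.exp (z*Complex.I)) * Complex.I_sq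

lemma cexp_norm (c t : ℝ) : ‖Complex.exp (-(Complex.I*c*t))‖ = 1 := by
  rw [Complex.norm_exp]
  simp [Complex.mul_re, Complex.mul_im]

lemma cexp_meas (c : ℝ) : Measurable (fun t : ℝ => Complex.exp (-(Complex.I*c*t))) :=
  Complex.measurable_exp.comp ((measurable_const.mul Complex.measurable_ofReal).neg)


/-- Lemma 1: For `f(x) = ∫ e^{-ixt} dμ(t)` with `μ` a finite positive
measure, the improper integral `∫_{→0}^{→∞} (f(x+u) - f(x-u))/u du` converges to
`-πi ∫ e^{-ixt} sign(t) dμ(t)` for every `x`, and the truncated integrals are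
uniformly bounded by an absolute constant times `μ(ℝ)`. -/
theorem hilbert_type_integral_of_fourier_stieltjes :
    ∃ C : ℝ, 0 < C ∧ ∀ (μ : Measure ℝ), IsFiniteMeasure μ →
      ∀ f : ℝ → ℂ, (∀ x : ℝ, f x = ∫ t : ℝ, Complex.exp (-(Complex.I * x * t)) ∂μ) →
        (∀ x : ℝ,
          Tendsto (fun p : ℝ × ℝ => ∫ u in p.1..p.2, (f (x + u) - f (x - u)) / (u : ℂ))
            ((nhdsWithin 0 (Set.Ioi 0)) ×ˢ atTop)
            (nhds (-(π : ℂ) * Complex.I *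
              ∫ t : ℝ, Complex.exp (-(Complex.I * x * t)) * ((Real.sign t : ℝ) : ℂ) ∂μ))) ∧
        (∀ x δ M : ℝ, 0 < δ → δ < M →
          ‖∫ u in δ..M, (f (x + u) - f (x - u)) / (u : ℂ)‖ ≤ C * (μ Set.univ).toReal) := by
  obtain ⟨B, hB0, hB⟩ := Gd_bound
  refine ⟨4*B+1, by positivity, ?_⟩
  intro μ hμfin f hf
  have hInt : ∀ c : ℝ, Integrable (fun t : ℝ => Complex.exp (-(Complex.I*c*t))) μ := by
    intro c
    refine Integrable.mono' (integrable_const (1:ℝ)) (cexp_meas c).aestronglyMeasurable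
      (ae_of_all _ fun t => ?_)
    rw [cexp_norm]
  -- key representation
  have key : ∀ (x δ M : ℝ), 0 < δ → δ ≤ M →
      (∫ u in δ..M, (f (x+u) - f (x-u)) / (u:ℂ))
        = ∫ t, Complex.exp (-(Complex.I*x*t)) * (-2*Complex.I)
            * ((Gd (t*M) - Gd (t*δ) : ℝ):ℂ) ∂μ := by
    intro x δ M hδ hδM
    have hpt : ∀ u : ℝ, u ≠ 0 → (f (x+u) - f (x-u)) / (u:ℂ)
        = ∫ t, Complex.exp (-(Complex.I*x*t)) * (-2*Complex.I)
            * ((Real.sin (u*t) / u : ℝ):ℂ) ∂μ := by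
      intro u hu
      rw [hf (x+u), hf (x-u), ← MeasureTheory.integral_sub (hInt (x+u)) (hInt (x-u)),
        ← MeasureTheory.integral_div]
      refine integral_congr_ae (ae_of_all _ fun t => ?_)
      dsimp only
      have e1 : -(Complex.I*((x+u : ℝ):ℂ)*(t:ℂ)) = -(Complex.I*x*t) + -((u*t : ℝ):ℂ)*Complex.I := by
        push_cast; ring
      have e2 : -(Complex.I*((x-u : ℝ):ℂ)*(t:ℂ)) = -(Complex.I*x*t) + ((u*t : ℝ):ℂ)*Complex.I := by
        push_cast; ring
      rw [e1, e2, Complex.exp_add, Complex.exp_add, ← mul_sub, exp_diff ((u*t : ℝ):ℂ),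
        ← Complex.ofReal_sin]
      push_cast
      ring
    have hcong : ∀ u ∈ Set.uIcc δ M, (f (x+u) - f (x-u)) / (u:ℂ)
        = ∫ t, Complex.exp (-(Complex.I*x*t)) * (-2*Complex.I)
            * ((Real.sin (u*t) / u : ℝ):ℂ) ∂μ := by
      intro u hu
      rw [Set.uIcc_of_le hδM] at hu
      exact hpt u (ne_of_gt (lt_of_lt_of_le hδ hu.1))
    rw [intervalIntegral.integral_congr hcong, intervalIntegral.integral_of_le hδM]
    haveI : IsFiniteMeasure (volume.restrict (Set.Ioc δ M)) :=
      ⟨by rw [Measure.restrict_apply_univ, Real.volume_Ioc]; exact ENNReal.ofReal_lt_top⟩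
    have hmeasH : Measurable (Function.uncurry fun u t : ℝ =>
        Complex.exp (-(Complex.I*x*t)) * (-2*Complex.I) * ((Real.sin (u*t) / u : ℝ):ℂ)) := by
      apply Measurable.mul
      · exact ((cexp_meas x).comp measurable_snd).mul measurable_const
      · exact Complex.measurable_ofReal.comp
          ((Real.measurable_sin.comp (measurable_fst.mul measurable_snd)).div measurable_fst)
    have hIntProd : Integrable (Function.uncurry fun u t : ℝ =>
        Complex.exp (-(Complex.I*x*t)) * (-2*Complex.I) * ((Real.sin (u*t) / u : ℝ):ℂ))
        ((volume.restrict (Set.Ioc δ M)).prod μ) := by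
      refine Integrable.mono' (integrable_const (2/δ)) hmeasH.aestronglyMeasurable ?_
      have hre : (volume.restrict (Set.Ioc δ M)).prod μ
          = (volume.prod μ).restrict ((Set.Ioc δ M) ×ˢ Set.univ) := by
        rw [← Measure.restrict_univ (μ := μ), Measure.prod_restrict, Measure.restrict_univ]
      rw [hre]
      filter_upwards [ae_restrict_mem (measurableSet_Ioc.prod MeasurableSet.univ)] with p hp
      obtain ⟨hp1, -⟩ := hp
      simp only [Function.uncurry]
      have h1 : ‖Complex.exp (-(Complex.I*x*(p.2:ℂ))) * (-2*Complex.I)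
          * ((Real.sin (p.1*p.2) / p.1 : ℝ):ℂ)‖
          = 2 * |Real.sin (p.1*p.2) / p.1| := by
        rw [norm_mul, norm_mul, cexp_norm, Complex.norm_real, Real.norm_eq_abs]
        simp
      rw [h1]
      have h2 : |Real.sin (p.1*p.2) / p.1| ≤ 1/δ := by
        rw [abs_div]
        exact div_le_div₀ (by norm_num) (Real.abs_sin_le_one _) hδ
          (by rw [abs_of_pos (lt_trans hδ hp1.1)]; exact hp1.1.le)
      calc 2 * |Real.sin (p.1*p.2) / p.1| ≤ 2 * (1/δ) := by linarith
        _ = 2/δ := by ring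
    have swap := MeasureTheory.integral_integral_swap hIntProd
    rw [swap]
    refine integral_congr_ae (ae_of_all _ fun t => ?_)
    dsimp only
    rw [← intervalIntegral.integral_of_le hδM]
    have : (∫ u in δ..M, Complex.exp (-(Complex.I*x*t)) * (-2*Complex.I)
        * ((Real.sin (u*t) / u : ℝ):ℂ))
        = (Complex.exp (-(Complex.I*x*t)) * (-2*Complex.I))
          * ∫ u in δ..M, ((Real.sin (u*t) / u : ℝ):ℂ) := by
      rw [← intervalIntegral.integral_const_mul]
    rw [this, intervalIntegral.integral_ofReal, S_eq t δ M]
  -- uniform bound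
  have bound : ∀ (x δ M : ℝ), 0 < δ → δ ≤ M →
      ‖∫ u in δ..M, (f (x+u) - f (x-u)) / (u:ℂ)‖ ≤ (4*B) * (μ Set.univ).toReal := by
    intro x δ M hδ hδM
    rw [key x δ M hδ hδM]
    refine norm_integral_le_of_norm_le_const (ae_of_all _ fun t => ?_)
    rw [norm_mul, norm_mul, cexp_norm, Complex.norm_real, Real.norm_eq_abs]
    have h1 : |Gd (t*M) - Gd (t*δ)| ≤ 2*B := by
      calc |Gd (t*M) - Gd (t*δ)| ≤ |Gd (t*M)| + |Gd (t*δ)| := abs_sub _ _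
        _ ≤ B + B := add_le_add (hB _) (hB _)
        _ = 2*B := by ring
    have h2 : ‖(-2*Complex.I : ℂ)‖ = 2 := by simp
    rw [h2]
    calc 1 * 2 * |Gd (t*M) - Gd (t*δ)| ≤ 1 * 2 * (2*B) := by linarith
      _ = 4*B := by ring
  refine ⟨?_, ?_⟩
  · -- convergence
    intro x
    have hDom : Tendsto (fun p : ℝ × ℝ => ∫ t, Complex.exp (-(Complex.I*x*t)) * (-2*Complex.I)
          * ((Gd (t*p.2) - Gd (t*p.1) : ℝ):ℂ) ∂μ)
        ((nhdsWithin 0 (Set.Ioi 0)) ×ˢ atTop)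
        (nhds (∫ t, Complex.exp (-(Complex.I*x*t)) * (-2*Complex.I)
          * ((π/2 * Real.sign t : ℝ):ℂ) ∂μ)) := by
      refine tendsto_integral_filter_of_dominated_convergence (fun _ => 4*B) ?_ ?_ ?_ ?_
      · refine Eventually.of_forall fun p => ?_
        refine (((cexp_meas x).mul measurable_const).mul ?_).aestronglyMeasurable
        exact Complex.measurable_ofReal.comp
          (((Gd_cont.comp (continuous_id.mul (continuous_const (y := p.2)))).sub
            (Gd_cont.comp (continuous_id.mul (continuous_const (y := p.1))))).measurable)
      · refine Eventually.of_forall fun p => ae_of_all _ fun t => ?_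
        rw [norm_mul, norm_mul, cexp_norm, Complex.norm_real, Real.norm_eq_abs]
        have h2 : ‖(-2*Complex.I : ℂ)‖ = 2 := by simp
        rw [h2]
        have h1 : |Gd (t*p.2) - Gd (t*p.1)| ≤ 2*B :=
          calc |Gd (t*p.2) - Gd (t*p.1)| ≤ |Gd (t*p.2)| + |Gd (t*p.1)| := abs_sub _ _
            _ ≤ B + B := add_le_add (hB _) (hB _)
            _ = 2*B := by ring
        calc 1 * 2 * |Gd (t*p.2) - Gd (t*p.1)| ≤ 1 * 2 * (2*B) := by linarith
          _ = 4*B := by ring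
      · exact integrable_const _
      · refine ae_of_all _ fun t => ?_
        have h1 := S_tendsto t
        have h2 : Tendsto (fun p : ℝ × ℝ => ((Gd (t*p.2) - Gd (t*p.1) : ℝ):ℂ))
            ((nhdsWithin 0 (Set.Ioi 0)) ×ˢ atTop) (nhds ((π/2 * Real.sign t : ℝ):ℂ)) :=
          (Complex.continuous_ofReal.tendsto _).comp h1
        exact h2.const_mul (Complex.exp (-(Complex.I*x*t)) * (-2*Complex.I))
    have hval : (∫ t, Complex.exp (-(Complex.I*x*t)) * (-2*Complex.I)
          * ((π/2 * Real.sign t : ℝ):ℂ) ∂μ)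
        = -(π : ℂ) * Complex.I * ∫ t, Complex.exp (-(Complex.I*x*t)) * ((Real.sign t : ℝ):ℂ) ∂μ := by
      rw [← MeasureTheory.integral_const_mul]
      refine integral_congr_ae (ae_of_all _ fun t => ?_)
      push_cast
      ring
    rw [← hval]
    have hev : ∀ᶠ p : ℝ × ℝ in (nhdsWithin 0 (Set.Ioi 0)) ×ˢ atTop, 0 < p.1 ∧ p.1 ≤ p.2 := by
      have ha : ∀ᶠ p : ℝ × ℝ in (nhdsWithin 0 (Set.Ioi 0)) ×ˢ atTop, p.1 ∈ Set.Ioi (0:ℝ) :=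
        tendsto_fst.eventually eventually_mem_nhdsWithin
      have hb : ∀ᶠ p : ℝ × ℝ in (nhdsWithin 0 (Set.Ioi 0)) ×ˢ atTop, p.1 < 1 :=
        tendsto_fst.eventually (eventually_nhdsWithin_of_eventually_nhds
          (eventually_lt_nhds zero_lt_one))
      have hc : ∀ᶠ p : ℝ × ℝ in (nhdsWithin 0 (Set.Ioi 0)) ×ˢ atTop, (1:ℝ) ≤ p.2 :=
        tendsto_snd.eventually (eventually_ge_atTop 1)
      filter_upwards [ha, hb, hc] with p h1 h2 h3
      exact ⟨h1, le_trans h2.le h3⟩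
    refine Tendsto.congr' ?_ hDom
    filter_upwards [hev] with p hp
    exact (key x p.1 p.2 hp.1 hp.2).symm
  · -- bound
    intro x δ M hδ hδM
    refine (bound x δ M hδ hδM.le).trans ?_
    have : (0:ℝ) ≤ (μ Set.univ).toReal := ENNReal.toReal_nonneg
    nlinarith
end

section
/- There exists a sequence b : ℕ → ℝ with b_k ≥ 0 for all k and Σ_{k=1}^∞ b_k < ∞, such that the function f₁(u) = Σ_{k=1}^∞ b_k sin(k u) (which belongs to the Wiener algebra W(ℝ), with ‖f₁‖_W ≤ Σ b_k) satisfies ∫_0^1 |f₁(u)| / u du = ∞. Consequently, the improper integral in the odd-part Hilbert-transform bound need not converge absolutely for functions of W(ℝ). -/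
open MeasureTheory Real Filter
open scoped ENNReal NNReal

namespace WEx

def E (j : ℕ) : ℕ := 3 ^ (4 + 4 * 100 ^ (j+1))

def nn : ℕ → ℕ
  | 0 => 1
  | j+1 => 1600 * nn j * E j

noncomputable def β (j : ℕ) : ℝ := (1/100 : ℝ)^j

lemma β_pos (j : ℕ) : 0 < β j := pow_pos (by norm_num) j

lemma E_pos (j : ℕ) : 0 < E j := pow_pos (by norm_num) _

lemma nn_pos (j : ℕ) : 0 < nn j := by
  induction j with
  | zero => simp [nn]
  | succ j ih => simp only [nn]; have := E_pos j; positivity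

lemma nn_lt (j : ℕ) : nn j < nn (j+1) := by
  have h1 : 1 ≤ E j := E_pos j
  have h2 : 0 < nn j := nn_pos j
  calc nn j < 1600 * nn j * 1 := by omega
  _ ≤ 1600 * nn j * E j := by
      exact Nat.mul_le_mul_left _ h1
  _ = nn (j+1) := rfl

lemma nn_mono : StrictMono nn := strictMono_nat_of_lt_succ nn_lt

lemma hβ_sum : Summable β := summable_geometric_of_lt_one (by norm_num) (by norm_num)

noncomputable def b : ℕ → ℝ := Function.extend nn β 0

lemma b_apply (j : ℕ) : b (nn j) = β j :=
  nn_mono.injective.extend_apply β 0 j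

lemma b_nonneg (k : ℕ) : 0 ≤ b k := by
  by_cases h : ∃ j, nn j = k
  · obtain ⟨j, rfl⟩ := h
    rw [b_apply]; exact (β_pos j).le
  · rw [b, Function.extend_apply' _ _ _ h]; simp

lemma b_summable : Summable b := (summable_extend_zero nn_mono.injective).2 hβ_sum

lemma sin_summable (u : ℝ) : Summable (fun j => β j * Real.sin (nn j * u)) := by
  apply Summable.of_abs
  apply Summable.of_nonneg_of_le (fun j => abs_nonneg _) (fun j => ?_) hβ_sum
  rw [abs_mul, abs_of_pos (β_pos j)]
  calc β j * |Real.sin (nn j * u)| ≤ β j * 1 :=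
        mul_le_mul_of_nonneg_left (abs_sin_le_one _) (β_pos j).le
  _ = β j := mul_one _

lemma f_eq (u : ℝ) :
    ∑' k : ℕ, b k * Real.sin (k * u) = ∑' j : ℕ, β j * Real.sin (nn j * u) := by
  have : (fun k : ℕ => b k * Real.sin (k * u))
      = Function.extend nn (fun j => β j * Real.sin (nn j * u)) 0 := by
    funext k
    by_cases h : ∃ j, nn j = k
    · obtain ⟨j, rfl⟩ := h
      rw [b_apply, nn_mono.injective.extend_apply]
    · rw [b, Function.extend_apply' _ _ _ h, Function.extend_apply' _ _ _ h]
      simp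
  rw [this, tsum_extend_zero nn_mono.injective]


lemma βnn_ratio (j : ℕ) : 2 * (β j * nn j) ≤ β (j+1) * nn (j+1) := by
  have hE : (81 : ℝ) ≤ E j := by
    have : (3:ℕ)^4 ≤ E j := Nat.pow_le_pow_right (by norm_num) (by omega)
    calc (81:ℝ) = ((3^4 : ℕ) : ℝ) := by norm_num
    _ ≤ (E j : ℝ) := Nat.cast_le.2 this
  have h2 : (nn (j+1) : ℝ) = 1600 * nn j * E j := by
    simp [nn]
  have hβ : β (j+1) = β j / 100 := by simp [β, pow_succ]; ring
  rw [h2, hβ]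
  have hn : (0:ℝ) < nn j := by exact_mod_cast nn_pos j
  have hb := β_pos j
  calc 2 * (β j * nn j) ≤ (81 * 16) * (β j * nn j) := by nlinarith
  _ ≤ β j / 100 * (1600 * nn j * E j) := by
      have h3 : (0:ℝ) ≤ β j * nn j := by positivity
      calc (81*16) * (β j * nn j) = β j /100 * (1600 * nn j * 81) := by ring
      _ ≤ β j / 100 * (1600 * nn j * E j) := by
          apply mul_le_mul_of_nonneg_left _ (by positivity)
          apply mul_le_mul_of_nonneg_left hE (by positivity)
  _ = β j / 100 * (1600 * ↑(nn j) * ↑(E j)) := rfl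

lemma sum_βnn_le (j : ℕ) :
    ∑ m ∈ Finset.range (j+1), β m * nn m ≤ 2 * (β j * nn j) := by
  induction j with
  | zero => norm_num [β, nn]
  | succ j ih =>
    rw [Finset.sum_range_succ]
    have := βnn_ratio j
    have hb := β_pos (j+1)
    have hn : (0:ℝ) < nn (j+1) := by exact_mod_cast nn_pos (j+1)
    nlinarith

lemma tail_le (j : ℕ) : ∑' m : ℕ, β (m + (j+2)) ≤ β (j+1) / 8 := by
  have h : ∀ m : ℕ, β (m + (j+2)) = β (j+2) * (1/100:ℝ)^m := by
    intro m; simp [β, pow_add]; ring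
  rw [tsum_congr h, tsum_mul_left, tsum_geometric_of_lt_one (by norm_num) (by norm_num)]
  have : β (j+2) = β (j+1) / 100 := by simp [β, pow_succ]; ring
  rw [this]
  have := β_pos (j+1)
  rw [show (1:ℝ) - 1/100 = 99/100 by norm_num]
  rw [div_mul_eq_mul_div, div_le_div_iff₀ (by norm_num) (by norm_num)]
  nlinarith


lemma pointwise (j : ℕ) {u : ℝ}
    (hu : u ∈ Set.Ioc ((nn (j+1) : ℝ))⁻¹ ((1600 * (nn j : ℝ)))⁻¹) :
    β (j+1) * (Real.sin ((nn (j+1) : ℝ) * u)^2 - 1/4)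
      ≤ |∑' m : ℕ, β m * Real.sin ((nn m : ℝ) * u)| := by
  obtain ⟨hu1, hu2⟩ := hu
  have hnj : (0:ℝ) < nn j := by exact_mod_cast nn_pos j
  have hnj1 : (0:ℝ) < nn (j+1) := by exact_mod_cast nn_pos (j+1)
  have hu0 : 0 < u := lt_trans (by positivity) hu1
  have hS := sin_summable u
  set T : ℝ := β (j+1) * Real.sin ((nn (j+1) : ℝ) * u) with hT
  set A : ℝ := ∑ m ∈ Finset.range (j+1), β m * Real.sin ((nn m : ℝ) * u) with hA
  set B : ℝ := ∑' m : ℕ, β (m + (j+2)) * Real.sin ((nn (m + (j+2)) : ℝ) * u) with hB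
  have hsplit : ∑' m : ℕ, β m * Real.sin ((nn m : ℝ) * u) = A + T + B := by
    rw [← Summable.sum_add_tsum_nat_add (j+2) hS, Finset.sum_range_succ]
  have hAbd : |A| ≤ β (j+1) / 8 := by
    have h1 : |A| ≤ ∑ m ∈ Finset.range (j+1), β m * nn m * u := by
      refine (Finset.abs_sum_le_sum_abs _ _).trans (Finset.sum_le_sum fun m _ => ?_)
      rw [abs_mul, abs_of_pos (β_pos m), mul_assoc]
      refine mul_le_mul_of_nonneg_left ?_ (β_pos m).le
      calc |Real.sin ((nn m : ℝ) * u)| ≤ |(nn m : ℝ) * u| := Real.abs_sin_le_abs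
      _ = (nn m : ℝ) * u := abs_of_nonneg (by positivity)
    have h2 : ∑ m ∈ Finset.range (j+1), β m * nn m * u
        = (∑ m ∈ Finset.range (j+1), β m * nn m) * u := by
      rw [Finset.sum_mul]
    have h3 : (∑ m ∈ Finset.range (j+1), β m * nn m) * u ≤ 2 * (β j * nn j) * u :=
      mul_le_mul_of_nonneg_right (sum_βnn_le j) hu0.le
    have h4 : 2 * (β j * nn j) * u ≤ 2 * (β j * nn j) * (1600 * (nn j:ℝ))⁻¹ :=
      mul_le_mul_of_nonneg_left hu2 (by have := β_pos j; positivity)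
    have h5 : 2 * (β j * nn j) * (1600 * (nn j:ℝ))⁻¹ = β j / 800 := by
      field_simp; ring
    have h6 : β j = 100 * β (j+1) := by simp [β, pow_succ]; ring
    rw [h5] at h4
    linarith [h1, h2, h3, h4, h6]
  have hBbd : |B| ≤ β (j+1) / 8 := by
    have hsm : Summable (fun m : ℕ => β (m + (j+2)) * Real.sin ((nn (m + (j+2)) : ℝ) * u)) :=
      ((summable_nat_add_iff (f := fun m : ℕ => β m * Real.sin ((nn m : ℝ) * u)) (j+2)).2 hS)
    have h1 : |B| ≤ ∑' m : ℕ, |β (m + (j+2)) * Real.sin ((nn (m + (j+2)) : ℝ) * u)| := by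
      simpa [abs_mul] using norm_tsum_le_tsum_norm (f := fun m : ℕ =>
        β (m + (j+2)) * Real.sin ((nn (m + (j+2)) : ℝ) * u)) (by simpa [abs_mul] using hsm.abs)
    have h2 : ∑' m : ℕ, |β (m + (j+2)) * Real.sin ((nn (m + (j+2)) : ℝ) * u)|
        ≤ ∑' m : ℕ, β (m + (j+2)) := by
      refine Summable.tsum_le_tsum (fun m => ?_) hsm.abs
        ((summable_nat_add_iff (f := β) (j+2)).2 hβ_sum)
      rw [abs_mul, abs_of_pos (β_pos _)]
      calc β (m+(j+2)) * |Real.sin ((nn (m+(j+2)) : ℝ) * u)| ≤ β (m+(j+2)) * 1 :=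
            mul_le_mul_of_nonneg_left (abs_sin_le_one _) (β_pos _).le
      _ = β (m+(j+2)) := mul_one _
    exact h1.trans (h2.trans (tail_le j))
  have hTlow : β (j+1) * Real.sin ((nn (j+1) : ℝ) * u)^2 ≤ |T| := by
    rw [hT, abs_mul, abs_of_pos (β_pos _)]
    refine mul_le_mul_of_nonneg_left ?_ (β_pos _).le
    rw [← sq_abs]
    exact pow_le_of_le_one (abs_nonneg _) (abs_sin_le_one _) (by norm_num)
  rw [hsplit]
  have habs : |T| ≤ |A + T + B| + (|A| + |B|) := by
    have : T = (A + T + B) - (A + B) := by ring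
    calc |T| = |(A + T + B) - (A + B)| := by rw [← this]
    _ ≤ |A + T + B| + |A + B| := abs_sub _ _
    _ ≤ |A + T + B| + (|A| + |B|) := by linarith [abs_add_le A B]
  linarith [hTlow, hAbd, hBbd, habs]


lemma inv_sq_integral {a c : ℝ} (ha : 0 < a) (hac : a ≤ c) :
    ∫ u in a..c, (u^2)⁻¹ = a⁻¹ - c⁻¹ := by
  have hIcc : Set.uIcc a c = Set.Icc a c := Set.uIcc_of_le hac
  have hder : ∀ u ∈ Set.uIcc a c, HasDerivAt (fun x : ℝ => -x⁻¹) ((u^2)⁻¹) u := by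
    intro u hu
    rw [hIcc] at hu
    have hu0 : u ≠ 0 := (lt_of_lt_of_le ha hu.1).ne'
    simpa using (hasDerivAt_inv hu0).fun_neg
  have hint : IntervalIntegrable (fun u : ℝ => (u^2)⁻¹) volume a c := by
    apply ContinuousOn.intervalIntegrable
    apply ContinuousOn.inv₀ ((continuous_pow 2).continuousOn)
    intro x hx
    rw [hIcc] at hx
    exact pow_ne_zero 2 (lt_of_lt_of_le ha hx.1).ne'
  rw [intervalIntegral.integral_eq_sub_of_hasDerivAt hder hint]
  ring

lemma cos_div_bound {N a c : ℝ} (hN : 0 < N) (ha : 0 < a) (hac : a ≤ c) :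
    |∫ u in a..c, Real.cos (2*N*u) / u| ≤ 3 / (2*N*a) := by
  have hIcc : Set.uIcc a c = Set.Icc a c := Set.uIcc_of_le hac
  have hc : 0 < c := lt_of_lt_of_le ha hac
  have h2N : (0:ℝ) < 2*N := by positivity
  have hpos : ∀ x ∈ Set.uIcc a c, 0 < x := by
    intro x hx; rw [hIcc] at hx; exact lt_of_lt_of_le ha hx.1
  have hu : ∀ x ∈ Set.uIcc a c, HasDerivAt (fun y : ℝ => y⁻¹) (-(x^2)⁻¹) x :=
    fun x hx => hasDerivAt_inv (hpos x hx).ne'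
  have hv : ∀ x ∈ Set.uIcc a c, HasDerivAt (fun y : ℝ => Real.sin (2*N*y) / (2*N))
      (Real.cos (2*N*x)) x := by
    intro x hx
    have h1 : HasDerivAt (fun y : ℝ => 2*N*y) (2*N) x := by
      simpa using (hasDerivAt_id x).const_mul (2*N)
    have h3 := ((Real.hasDerivAt_sin (2*N*x)).comp x h1).div_const (2*N)
    rw [mul_div_cancel_right₀ _ h2N.ne'] at h3
    exact h3
  have hcont1 : IntervalIntegrable (fun x : ℝ => -(x^2)⁻¹) volume a c := by
    apply ContinuousOn.intervalIntegrable
    apply ContinuousOn.neg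
    apply ContinuousOn.inv₀ ((continuous_pow 2).continuousOn)
    exact fun x hx => pow_ne_zero 2 (hpos x hx).ne'
  have hcont2 : IntervalIntegrable (fun x : ℝ => Real.cos (2*N*x)) volume a c :=
    (Real.continuous_cos.comp (continuous_const.mul continuous_id)).continuousOn.intervalIntegrable
  have hibp := intervalIntegral.integral_mul_deriv_eq_deriv_mul hu hv hcont1 hcont2
  have heq : ∫ u in a..c, Real.cos (2*N*u) / u = ∫ u in a..c, u⁻¹ * Real.cos (2*N*u) :=
    intervalIntegral.integral_congr (fun x _ => by simp [div_eq_inv_mul])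
  have hbnd : ∀ t s : ℝ, 0 < t → a ≤ t → |t⁻¹ * (Real.sin s / (2*N))| ≤ a⁻¹/(2*N) := by
    intro t s ht hat
    rw [abs_mul, abs_div, abs_of_pos h2N, abs_of_pos (inv_pos.2 ht)]
    calc t⁻¹ * (|Real.sin s| / (2*N)) ≤ a⁻¹ * (1 / (2*N)) := by
          apply mul_le_mul (inv_anti₀ ha hat)
            ((div_le_div_iff_of_pos_right h2N).2 (Real.abs_sin_le_one _)) (by positivity) (by positivity)
    _ = a⁻¹/(2*N) := by ring
  have hrem : |∫ x in a..c, (-(x^2)⁻¹) * (Real.sin (2*N*x) / (2*N))| ≤ a⁻¹ / (2*N) := by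
    have hb : IntervalIntegrable (fun x : ℝ => (x^2)⁻¹ * (2*N)⁻¹) volume a c := by
      apply IntervalIntegrable.mul_const
      apply ContinuousOn.intervalIntegrable
      apply ContinuousOn.inv₀ ((continuous_pow 2).continuousOn)
      exact fun x hx => pow_ne_zero 2 (hpos x hx).ne'
    have hle := intervalIntegral.norm_integral_le_abs_of_norm_le (μ := volume) (a := a) (b := c)
      (f := fun x : ℝ => (-(x^2)⁻¹) * (Real.sin (2*N*x) / (2*N)))
      (g := fun x : ℝ => (x^2)⁻¹ * (2*N)⁻¹) ?_ hb
    · have hgval : ∫ x in a..c, (x^2)⁻¹ * (2*N)⁻¹ = (a⁻¹ - c⁻¹) * (2*N)⁻¹ := by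
        rw [intervalIntegral.integral_mul_const, inv_sq_integral ha hac]
      have hca : c⁻¹ ≤ a⁻¹ := inv_anti₀ ha hac
      have hgnn : (0:ℝ) ≤ (a⁻¹ - c⁻¹) * (2*N)⁻¹ := by
        have h2Ninv : (0:ℝ) < (2*N)⁻¹ := by positivity
        nlinarith
      have hfin : (a⁻¹ - c⁻¹) * (2*N)⁻¹ ≤ a⁻¹ / (2*N) := by
        rw [div_eq_mul_inv]
        have h2Ninv : (0:ℝ) < (2*N)⁻¹ := by positivity
        have : (0:ℝ) < c⁻¹ := by positivity
        nlinarith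
      calc |∫ x in a..c, (-(x^2)⁻¹) * (Real.sin (2*N*x) / (2*N))|
          ≤ |∫ x in a..c, (x^2)⁻¹ * (2*N)⁻¹| := hle
      _ = (a⁻¹ - c⁻¹) * (2*N)⁻¹ := by rw [hgval, abs_of_nonneg hgnn]
      _ ≤ a⁻¹ / (2*N) := hfin
    · refine (ae_restrict_iff' measurableSet_uIoc).2 (Filter.Eventually.of_forall fun x hx => ?_)
      have hx0 : 0 < x := by
        rw [Set.uIoc_of_le hac] at hx; exact lt_of_lt_of_le ha hx.1.le
      have hax : a ≤ x := by
        rw [Set.uIoc_of_le hac] at hx; exact hx.1.le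
      rw [Real.norm_eq_abs, abs_mul, abs_neg, abs_inv,
        abs_of_pos (by positivity : (0:ℝ) < x^2)]
      apply mul_le_mul_of_nonneg_left _ (by positivity)
      rw [abs_div, abs_of_pos h2N]
      calc |Real.sin (2*N*x)| / (2*N) ≤ 1 / (2*N) :=
            (div_le_div_iff_of_pos_right h2N).2 (Real.abs_sin_le_one _)
      _ = (2*N)⁻¹ := one_div _
  rw [heq, hibp]
  have h1 := hbnd c (2*N*c) hc hac
  have h2 := hbnd a (2*N*a) ha le_rfl
  have key : |c⁻¹ * (Real.sin (2*N*c)/(2*N)) - a⁻¹ * (Real.sin (2*N*a)/(2*N))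
      - ∫ x in a..c, (-(x^2)⁻¹) * (Real.sin (2*N*x) / (2*N))|
      ≤ a⁻¹/(2*N) + a⁻¹/(2*N) + a⁻¹/(2*N) := by
    calc _ ≤ |c⁻¹ * (Real.sin (2*N*c)/(2*N)) - a⁻¹ * (Real.sin (2*N*a)/(2*N))|
        + |∫ x in a..c, (-(x^2)⁻¹) * (Real.sin (2*N*x) / (2*N))| := abs_sub _ _
    _ ≤ (|c⁻¹ * (Real.sin (2*N*c)/(2*N))| + |a⁻¹ * (Real.sin (2*N*a)/(2*N))|)
        + |∫ x in a..c, (-(x^2)⁻¹) * (Real.sin (2*N*x) / (2*N))| := by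
          have := abs_sub (c⁻¹ * (Real.sin (2*N*c)/(2*N))) (a⁻¹ * (Real.sin (2*N*a)/(2*N)))
          linarith
    _ ≤ a⁻¹/(2*N) + a⁻¹/(2*N) + a⁻¹/(2*N) := by linarith [hrem]
  have hfin : a⁻¹/(2*N) + a⁻¹/(2*N) + a⁻¹/(2*N) = 3/(2*N*a) := by
    field_simp; ring
  rw [← hfin]
  exact key


lemma osc_integral {N a c : ℝ} (ha : 0 < a) (hac : a ≤ c) (hNa : 1 ≤ N * a) :
    1/2 * Real.log (c/a) - 3/4 ≤ ∫ u in a..c, Real.sin (N*u)^2 / u := by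
  have hN : 0 < N := by
    rcases le_or_gt N 0 with h | h
    · nlinarith
    · exact h
  have hIcc : Set.uIcc a c = Set.Icc a c := Set.uIcc_of_le hac
  have hpos : ∀ x ∈ Set.uIcc a c, 0 < x := by
    intro x hx; rw [hIcc] at hx; exact lt_of_lt_of_le ha hx.1
  have h0 : (0:ℝ) ∉ Set.uIcc a c := fun h => lt_irrefl 0 (hpos 0 h)
  have hint1 : IntervalIntegrable (fun u : ℝ => u⁻¹) volume a c := by
    apply ContinuousOn.intervalIntegrable
    exact continuousOn_id.inv₀ (fun x hx => (hpos x hx).ne')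
  have hint2 : IntervalIntegrable (fun u : ℝ => Real.cos (2*N*u) / u) volume a c := by
    apply ContinuousOn.intervalIntegrable
    exact (Real.continuous_cos.comp (continuous_const.mul continuous_id)).continuousOn.div
      continuousOn_id (fun x hx => (hpos x hx).ne')
  have heq : ∀ u : ℝ, u ≠ 0 → Real.sin (N*u)^2 / u
      = 1/2 * u⁻¹ - 1/2 * (Real.cos (2*N*u) / u) := by
    intro u hu
    have : Real.sin (N*u)^2 = 1/2 - Real.cos (2*(N*u))/2 := Real.sin_sq_eq_half_sub _
    rw [show 2*N*u = 2*(N*u) by ring]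
    field_simp [this]
    rw [this]; ring_nf
  have hcong : ∫ u in a..c, Real.sin (N*u)^2 / u
      = ∫ u in a..c, (1/2 * u⁻¹ - 1/2 * (Real.cos (2*N*u) / u)) :=
    intervalIntegral.integral_congr (fun x hx => heq x (hpos x hx).ne')
  rw [hcong, intervalIntegral.integral_sub (hint1.const_mul _) (hint2.const_mul _),
    intervalIntegral.integral_const_mul, intervalIntegral.integral_const_mul,
    integral_inv h0]
  have hcb := cos_div_bound hN ha hac
  have h3 : 3 / (2*N*a) ≤ 3/2 := by
    rw [div_le_div_iff₀ (by positivity) (by norm_num)]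
    nlinarith
  have habs : (∫ u in a..c, Real.cos (2*N*u) / u) ≤ 3/2 := by
    have := abs_le.1 hcb
    linarith
  linarith


lemma log3 : (1:ℝ) ≤ Real.log 3 := by
  rw [Real.le_log_iff_exp_le (by norm_num)]
  calc Real.exp 1 ≤ 2.7182818286 := (Real.exp_one_lt_d9).le
  _ ≤ 3 := by norm_num

lemma nn_cast_succ (j : ℕ) : ((nn (j+1) : ℝ)) = 1600 * (nn j : ℝ) * (E j : ℝ) := by
  simp [nn]

lemma interval_lb (j : ℕ) :
    1 ≤ ∫⁻ u in Set.Ioc ((nn (j+1):ℝ))⁻¹ ((1600*(nn j:ℝ)))⁻¹,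
      ENNReal.ofReal (|∑' k : ℕ, b k * Real.sin ((k:ℝ) * u)| / u) := by
  have hnj : (0:ℝ) < nn j := by exact_mod_cast nn_pos j
  have hnj1 : (0:ℝ) < nn (j+1) := by exact_mod_cast nn_pos (j+1)
  have hE : (1:ℝ) ≤ E j := by exact_mod_cast E_pos j
  set N : ℝ := (nn (j+1) : ℝ) with hNdef
  set a : ℝ := ((nn (j+1):ℝ))⁻¹ with hadef
  set c : ℝ := ((1600*(nn j:ℝ)))⁻¹ with hcdef
  have ha : 0 < a := by positivity
  have hc : 0 < c := by positivity
  have hcast := nn_cast_succ j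
  have hle : 1600 * (nn j:ℝ) ≤ N := by
    rw [hNdef, hcast]
    nlinarith
  have hac : a ≤ c := by
    rw [hadef, hcdef]
    exact inv_anti₀ (by positivity) hle
  have hNa : N * a = 1 := mul_inv_cancel₀ (by positivity)
  set g : ℝ → ℝ := fun u => β (j+1) * (Real.sin (N*u)^2 - 1/4) / u with hgdef
  have hgcont : ContinuousOn g (Set.Icc a c) := by
    apply ContinuousOn.div
    · exact (continuous_const.mul ((Real.continuous_sin.comp
        (continuous_const.mul continuous_id)).pow 2 |>.sub continuous_const)).continuousOn
    · exact continuousOn_id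
    · intro x hx; exact (lt_of_lt_of_le ha hx.1).ne'
  have hgint : IntegrableOn g (Set.Ioc a c) volume :=
    (hgcont.integrableOn_Icc).mono_set Set.Ioc_subset_Icc_self
  set gp : ℝ → ℝ := fun u => max (g u) 0 with hgpdef
  have hgpint : IntegrableOn gp (Set.Ioc a c) volume := hgint.pos_part
  -- pointwise: ofReal (gp u) ≤ ofReal (|f₁ u| / u) on Ioc a c
  have hpt : ∀ u ∈ Set.Ioc a c,
      ENNReal.ofReal (gp u) ≤ ENNReal.ofReal (|∑' k : ℕ, b k * Real.sin ((k:ℝ) * u)| / u) := by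
    intro u hu
    have hu0 : 0 < u := lt_trans ha hu.1
    apply ENNReal.ofReal_le_ofReal
    have hnum := pointwise j hu
    rw [← f_eq u] at hnum
    have h1 : g u ≤ |∑' k : ℕ, b k * Real.sin ((k:ℝ) * u)| / u := by
      rw [hgdef]
      exact (div_le_div_iff_of_pos_right hu0).2 hnum
    exact max_le h1 (by positivity)
  -- value of the interval integral
  have hint_sin : IntervalIntegrable (fun u : ℝ => Real.sin (N*u)^2/u) volume a c := by
    apply ContinuousOn.intervalIntegrable
    rw [Set.uIcc_of_le hac]
    apply ContinuousOn.div
    · exact ((Real.continuous_sin.comp (continuous_const.mul continuous_id)).pow 2).continuousOn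
    · exact continuousOn_id
    · intro x hx; exact (lt_of_lt_of_le ha hx.1).ne'
  have hint_inv : IntervalIntegrable (fun u : ℝ => u⁻¹) volume a c := by
    apply ContinuousOn.intervalIntegrable
    rw [Set.uIcc_of_le hac]
    exact continuousOn_id.inv₀ (fun x hx => (lt_of_lt_of_le ha hx.1).ne')
  have h0uIcc : (0:ℝ) ∉ Set.uIcc a c := by
    rw [Set.uIcc_of_le hac]
    intro h
    exact absurd h.1 (not_le.2 ha)
  have hgsplit : ∫ u in a..c, g u
      = β (j+1) * (∫ u in a..c, Real.sin (N*u)^2/u) - β (j+1)/4 * Real.log (c/a) := by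
    have hcong : ∫ u in a..c, g u
        = ∫ u in a..c, (β (j+1) * (Real.sin (N*u)^2/u) - β (j+1)/4 * u⁻¹) := by
      apply intervalIntegral.integral_congr
      intro x hx
      rw [Set.uIcc_of_le hac] at hx
      have hx0 : x ≠ 0 := (lt_of_lt_of_le ha hx.1).ne'
      rw [hgdef]
      field_simp
    rw [hcong, intervalIntegral.integral_sub (hint_sin.const_mul _) (hint_inv.const_mul _),
      intervalIntegral.integral_const_mul, intervalIntegral.integral_const_mul,
      integral_inv h0uIcc]
  have hNa' : (1:ℝ) ≤ N * a := hNa.ge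
  have hosc := osc_integral ha hac hNa'
  have hca : c/a = (E j : ℝ) := by
    have h1 : (1600*(nn j:ℝ)) ≠ 0 := by positivity
    rw [hcdef, hadef, div_eq_mul_inv, inv_inv, hcast, ← mul_assoc]
    rw [inv_mul_cancel₀ h1, one_mul]
  have hLlb : (4 + 4*(100:ℝ)^(j+1)) ≤ Real.log (c/a) := by
    rw [hca]
    have : (E j : ℝ) = 3^(4 + 4*100^(j+1)) := by
      simp only [E]; push_cast; ring
    rw [this, ← Real.rpow_natCast 3 (4 + 4*100^(j+1)), Real.log_rpow (by norm_num)]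
    have h1 : (0:ℝ) ≤ ((4 + 4*100^(j+1) : ℕ) : ℝ) := by positivity
    calc (4 + 4*(100:ℝ)^(j+1)) = ((4 + 4*100^(j+1) : ℕ) : ℝ) * 1 := by push_cast; ring
    _ ≤ ((4 + 4*100^(j+1) : ℕ) : ℝ) * Real.log 3 := by
        exact mul_le_mul_of_nonneg_left log3 h1
  have hIg : 1 ≤ ∫ u in Set.Ioc a c, g u := by
    rw [← intervalIntegral.integral_of_le hac, hgsplit]
    have hβp := β_pos (j+1)
    have hmul := mul_le_mul_of_nonneg_left hLlb hβp.le
    have hmul2 := mul_le_mul_of_nonneg_left hosc hβp.le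
    have hprod : β (j+1) * (100:ℝ)^(j+1) = 1 := by
      simp only [β]; rw [← mul_pow]; norm_num
    nlinarith [hmul, hmul2, hprod]
  calc (1:ℝ≥0∞) = ENNReal.ofReal 1 := by simp
  _ ≤ ENNReal.ofReal (∫ u in Set.Ioc a c, g u) := ENNReal.ofReal_le_ofReal hIg
  _ ≤ ENNReal.ofReal (∫ u in Set.Ioc a c, gp u) := by
      apply ENNReal.ofReal_le_ofReal
      exact integral_mono hgint hgpint (fun u => le_max_left _ _)
  _ = ∫⁻ u in Set.Ioc a c, ENNReal.ofReal (gp u) := by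
      apply ofReal_integral_eq_lintegral_ofReal hgpint
      exact Filter.Eventually.of_forall (fun u => le_max_right _ _)
  _ ≤ ∫⁻ u in Set.Ioc a c, ENNReal.ofReal (|∑' k : ℕ, b k * Real.sin ((k:ℝ) * u)| / u) :=
      lintegral_mono_ae ((ae_restrict_iff' measurableSet_Ioc).2
        (Filter.Eventually.of_forall hpt))

end WEx


/-- There is a nonnegative summable sequence `b_k` such that
`f₁(u) = Σ_k b_k sin(ku)` (a function of the Wiener algebra `W(ℝ)`) satisfies
`∫_0^1 |f₁(u)|/u du = ∞`: the improper integral of Lemma 1 need not converge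
absolutely. -/
theorem exists_wiener_sine_series_nonabsolute :
    ∃ b : ℕ → ℝ, (∀ k : ℕ, 0 ≤ b k) ∧ Summable b ∧
      ∫⁻ u in Set.Ioc (0 : ℝ) 1,
        ENNReal.ofReal (|∑' k : ℕ, b k * Real.sin (k * u)| / u) = ⊤ := by
  refine ⟨WEx.b, WEx.b_nonneg, WEx.b_summable, ?_⟩
  set F : ℝ → ℝ≥0∞ := fun u => ENNReal.ofReal (|∑' k : ℕ, WEx.b k * Real.sin (k * u)| / u)
    with hF
  set S : ℕ → Set ℝ := fun j => Set.Ioc ((WEx.nn (j+1):ℝ))⁻¹ ((1600*(WEx.nn j:ℝ)))⁻¹ with hS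
  have hnpos : ∀ j : ℕ, (0:ℝ) < WEx.nn j := fun j => by exact_mod_cast WEx.nn_pos j
  have hmeas : ∀ j, MeasurableSet (S j) := fun j => measurableSet_Ioc
  have hdisj : Pairwise (Function.onFun Disjoint S) := by
    have key : ∀ i j : ℕ, i < j → Disjoint (S i) (S j) := by
      intro i j hij
      apply Set.disjoint_left.2
      intro x hxi hxj
      have h1 : (1600*(WEx.nn j:ℝ))⁻¹ ≤ ((WEx.nn (i+1):ℝ))⁻¹ := by
        apply inv_anti₀ (hnpos (i+1))
        have h2 : WEx.nn (i+1) ≤ WEx.nn j := WEx.nn_mono.monotone hij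
        have h3 : (WEx.nn (i+1) : ℝ) ≤ WEx.nn j := by exact_mod_cast h2
        nlinarith [hnpos j]
      exact absurd (hxj.2.trans h1) (not_le.2 hxi.1)
    intro i j hij
    rcases lt_or_gt_of_ne hij with h | h
    · exact key i j h
    · exact (key j i h).symm
  have hsub : ∀ j, S j ⊆ Set.Ioc (0:ℝ) 1 := by
    intro j x hx
    refine ⟨lt_trans (inv_pos.2 (hnpos (j+1))) hx.1, hx.2.trans ?_⟩
    have hn1 : (1:ℝ) ≤ WEx.nn j := by exact_mod_cast WEx.nn_pos j
    rw [inv_le_one_iff₀]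
    right
    linarith
  have h1 : (⊤:ℝ≥0∞) ≤ ∫⁻ u in Set.Ioc (0:ℝ) 1, F u := by
    calc (⊤:ℝ≥0∞) = ∑' _ : ℕ, (1:ℝ≥0∞) :=
          (ENNReal.tsum_const_eq_top_of_ne_zero one_ne_zero).symm
    _ ≤ ∑' j : ℕ, ∫⁻ u in S j, F u := ENNReal.tsum_le_tsum (fun j => WEx.interval_lb j)
    _ = ∫⁻ u in ⋃ j, S j, F u := (lintegral_iUnion hmeas hdisj _).symm
    _ ≤ ∫⁻ u in Set.Ioc (0:ℝ) 1, F u := lintegral_mono_set (Set.iUnion_subset hsub)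
  exact top_le_iff.1 h1
end
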